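/- arXiv:1310.0891 — 5 statements merged into one kernel-verified Lean document; each statement's English description precedes it below -/
import Mathlib

section
/- Let κ be an infinite cardinal, δ ≤ κ a cardinal, and ⟨μ_α : α < δ⟩ a sequence of pairwise distinct normal measures on κ. Then there exists a sequence ⟨A_α : α < δ⟩ such that A_α ∈ μ_α for each α < δ and A_α ∩ A_β = ∅ whenever α ≠ β. -/
universe u

/-- An ultrafilter `W` on a set is `κ`-complete if the intersection of any family of
fewer than `κ` members of `W` is again a member of `W`. -/
def UFComplete (κ : Cardinal.{u}) {X : Type u} (W : Ultrafilter X) : Prop :=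
  ∀ (ι : Type u) (f : ι → Set X), Cardinal.mk ι < κ → (∀ i, f i ∈ W) → (⋂ i, f i) ∈ W

/-- A normal measure on an infinite cardinal `κ` (whose underlying set of ordinals below
`κ` is realized as `κ.ord.ToType`) is a `κ`-complete nonprincipal ultrafilter `U` on `κ`
such that every function `f : κ → κ` regressive on a set in `U` is constant on a set
in `U`. -/
def IsNormalMeasure (κ : Cardinal.{u}) (U : Ultrafilter κ.ord.ToType) : Prop :=
  UFComplete κ U ∧ (∀ x : κ.ord.ToType, ({x} : Set κ.ord.ToType) ∉ U) ∧
    ∀ f : κ.ord.ToType → κ.ord.ToType,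
      {ξ | f ξ < ξ} ∈ U → ∃ c, {ξ | f ξ = c} ∈ U

/-- Sets of size `< κ` are not in a `κ`-complete nonprincipal ultrafilter. -/
lemma small_not_mem (κ : Cardinal.{u}) (U : Ultrafilter κ.ord.ToType)
    (h : IsNormalMeasure κ U) (S : Set κ.ord.ToType) (hS : Cardinal.mk S < κ) : S ∉ U := by
  have hcompl : Sᶜ ∈ U := by
    have h2 : (⋂ x : S, ({(x : κ.ord.ToType)}ᶜ : Set κ.ord.ToType)) ∈ U :=
      h.1 S (fun x => {(x : κ.ord.ToType)}ᶜ) hS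
        (fun x => (Ultrafilter.compl_mem_iff_notMem).2 (h.2.1 x))
    convert h2 using 1
    ext ξ
    simp only [Set.mem_iInter, Set.mem_compl_iff, Set.mem_singleton_iff]
    constructor
    · intro hξ x he; exact hξ (he ▸ x.2)
    · intro hξ hmem; exact (hξ ⟨ξ, hmem⟩) rfl
  intro hmem
  exact (Ultrafilter.compl_mem_iff_notMem.1 hcompl) hmem

/-- Diagonal intersection lemma for normal measures. -/
lemma diag_mem (κ : Cardinal.{u}) (U : Ultrafilter κ.ord.ToType)
    (h : IsNormalMeasure κ U) (Y : κ.ord.ToType → Set κ.ord.ToType)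
    (hY : ∀ η, Y η ∈ U) : {ξ | ∀ η < ξ, ξ ∈ Y η} ∈ U := by
  by_contra hcon
  have hbad : {ξ | ∀ η < ξ, ξ ∈ Y η}ᶜ ∈ U := Ultrafilter.compl_mem_iff_notMem.2 hcon
  classical
  set f : κ.ord.ToType → κ.ord.ToType := fun ξ =>
    if hξ : ∃ η < ξ, ξ ∉ Y η then hξ.choose else ξ with hf
  have hreg : {ξ | f ξ < ξ} ∈ U := by
    refine U.toFilter.mem_of_superset hbad ?_
    intro ξ hξ
    simp only [Set.mem_compl_iff, Set.mem_setOf_eq, not_forall] at hξ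
    have hξ' : ∃ η < ξ, ξ ∉ Y η := by
      obtain ⟨η, hη, hmem⟩ := hξ; exact ⟨η, hη, hmem⟩
    simp only [Set.mem_setOf_eq, hf, dif_pos hξ']
    exact hξ'.choose_spec.1
  obtain ⟨c, hc⟩ := h.2.2 f hreg
  have hne : ({ξ | f ξ = c} ∩ {ξ | ∀ η < ξ, ξ ∈ Y η}ᶜ ∩ Y c).Nonempty :=
    Ultrafilter.nonempty_of_mem
      (Filter.inter_mem (Filter.inter_mem hc hbad) (hY c))
  obtain ⟨ξ, ⟨hfc, hξbad⟩, hξY⟩ := hne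
  simp only [Set.mem_compl_iff, Set.mem_setOf_eq, not_forall] at hξbad
  have hξ' : ∃ η < ξ, ξ ∉ Y η := by
    obtain ⟨η, hη, hmem⟩ := hξbad; exact ⟨η, hη, hmem⟩
  have hfval : f ξ = hξ'.choose := by simp only [hf, dif_pos hξ']
  have hnot : ξ ∉ Y (f ξ) := hfval ▸ hξ'.choose_spec.2
  rw [Set.mem_setOf_eq] at hfc
  exact hnot (hfc ▸ hξY)

/-- If `κ` is an infinite cardinal, `δ ≤ κ` a cardinal, and
`⟨μ_α : α < δ⟩` a sequence of pairwise distinct normal measures on `κ`, then there is a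
sequence `⟨A_α : α < δ⟩` with `A_α ∈ μ_α` for each `α < δ` and `A_α ∩ A_β = ∅` for
`α ≠ β`. -/
theorem disjoint_choice_of_normal (κ : Cardinal.{u}) (hκ : Cardinal.aleph0 ≤ κ)
    {ι : Type u} (hι : Cardinal.mk ι ≤ κ)
    (μ : ι → Ultrafilter κ.ord.ToType) (hdist : Function.Injective μ)
    (hnormal : ∀ i, IsNormalMeasure κ (μ i)) :
    ∃ A : ι → Set κ.ord.ToType, (∀ i, A i ∈ μ i) ∧ ∀ i j, i ≠ j → A i ∩ A j = ∅ := by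
  classical
  -- embed ι into κ.ord.toType
  have hmk : Cardinal.mk ι ≤ Cardinal.mk κ.ord.ToType := by
    rwa [Cardinal.mk_ord_toType]
  obtain ⟨e⟩ := hmk
  -- separating sets
  have hsep : ∀ i j : ι, i ≠ j → ∃ S : Set κ.ord.ToType, S ∈ μ i ∧ S ∉ μ j := by
    intro i j hij
    by_contra hcon
    push_neg at hcon
    refine hdist.ne hij ?_
    have hle : (μ j : Filter κ.ord.ToType) ≤ (μ i : Filter κ.ord.ToType) := fun s hs =>
      hcon s hs
    exact (Ultrafilter.eq_of_le hle).symm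
  choose S hS1 hS2 using hsep
  -- pairwise "separating" sets with built-in disjointness
  set S' : ι → ι → Set κ.ord.ToType :=
    fun i j => if h : i ≠ j then S i j h else Set.univ with hS'
  set D : ι → ι → Set κ.ord.ToType := fun i j => S' i j ∩ (S' j i)ᶜ with hD
  have hDmem : ∀ i j, i ≠ j → D i j ∈ μ i := by
    intro i j hij
    have h1 : S' i j ∈ μ i := by simp only [hS', dif_pos hij]; exact hS1 i j hij
    have h2 : (S' j i)ᶜ ∈ μ i := by
      simp only [hS', dif_pos hij.symm]
      exact Ultrafilter.compl_mem_iff_notMem.2 (hS2 j i hij.symm)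
    exact Filter.inter_mem h1 h2
  -- family for diagonal intersection
  set Y : ι → κ.ord.ToType → Set κ.ord.ToType := fun i η =>
    if h : ∃ j, e j = η ∧ j ≠ i then D i h.choose else Set.univ
    with hYdef
  have hYmem : ∀ i η, Y i η ∈ μ i := by
    intro i η
    simp only [hYdef]
    split
    · next h => exact hDmem _ _ h.choose_spec.2.symm
    · exact Filter.univ_mem
  have hYval : ∀ i j (hij : j ≠ i), Y i (e j) = D i j := by
    intro i j hij
    have hex : ∃ k, e k = e j ∧ k ≠ i := ⟨j, rfl, hij⟩
    have hk : hex.choose = j := e.injective hex.choose_spec.1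
    simp only [hYdef, dif_pos hex, hk]
  -- the sets A
  set A : ι → Set κ.ord.ToType :=
    fun i => {ξ | e i < ξ} ∩ {ξ | ∀ η < ξ, ξ ∈ Y i η} with hA
  refine ⟨A, ?_, ?_⟩
  · intro i
    refine Filter.inter_mem ?_ (diag_mem κ (μ i) (hnormal i) (Y i) (hYmem i))
    -- {ξ | e i < ξ} ∈ μ i since its complement Iic (e i) is small
    have hsmall : Cardinal.mk (Set.Iic (e i)) < κ := by
      have hsub : (Set.Iic (e i) : Set κ.ord.ToType) ⊆ Set.Iio (e i) ∪ {e i} := by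
        intro x hx
        rcases lt_or_eq_of_le (Set.mem_Iic.mp hx) with h | h
        · exact Or.inl h
        · exact Or.inr h
      calc Cardinal.mk (Set.Iic (e i))
          ≤ Cardinal.mk ((Set.Iio (e i) ∪ {e i} : Set κ.ord.ToType)) := Cardinal.mk_le_mk_of_subset hsub
        _ ≤ Cardinal.mk (Set.Iio (e i)) + Cardinal.mk ({e i} : Set κ.ord.ToType) :=
            Cardinal.mk_union_le _ _
        _ < κ := by
            refine Cardinal.add_lt_of_lt hκ (Cardinal.mk_Iio_ord_toType _) ?_
            rw [Cardinal.mk_singleton]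
            exact lt_of_lt_of_le Cardinal.one_lt_aleph0 hκ
    have hni : Set.Iic (e i) ∉ μ i := small_not_mem κ (μ i) (hnormal i) _ hsmall
    have : (Set.Iic (e i))ᶜ ∈ μ i := Ultrafilter.compl_mem_iff_notMem.2 hni
    rw [Ultrafilter.mem_coe]
    convert this using 1
    ext ξ
    simp only [Set.mem_setOf_eq, Set.mem_compl_iff, Set.mem_Iic, lt_iff_not_ge]
  · intro i j hij
    ext ξ
    simp only [Set.mem_inter_iff, Set.mem_empty_iff_false, iff_false, not_and]
    rintro ⟨hi1, hi2⟩ ⟨hj1, hj2⟩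
    have hξi : ξ ∈ Y i (e j) := hi2 (e j) hj1
    have hξj : ξ ∈ Y j (e i) := hj2 (e i) hi1
    rw [hYval i j (Ne.symm hij)] at hξi
    rw [hYval j i hij] at hξj
    rw [hD] at hξi hξj
    exact hξi.2 hξj.1
end

section
/- Let κ be an infinite cardinal, U a normal measure on κ, and U' an ultrafilter on a set T such that U' ≤_RK U, that is, U' = f_*(U) for some function f : κ → T. Then U' is principal or U' is isomorphic to U. -/
universe u

/-- Ultrafilters `U₁` on `X₁` and `U₂` on `X₂` are isomorphic if there are `A₁ ∈ U₁`,
`A₂ ∈ U₂` and a bijection `h : A₁ → A₂` such that for every `X ⊆ A₁`: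
`X ∈ U₁ ↔ h[X] ∈ U₂`. -/
def UFIso {X₁ : Type u} {X₂ : Type u} (U₁ : Ultrafilter X₁) (U₂ : Ultrafilter X₂) : Prop :=
  ∃ (A₁ : Set X₁) (A₂ : Set X₂) (h : X₁ → X₂),
    A₁ ∈ U₁ ∧ A₂ ∈ U₂ ∧ Set.BijOn h A₁ A₂ ∧ ∀ X ⊆ A₁, (X ∈ U₁ ↔ h '' X ∈ U₂)

/-- If `κ` is an infinite cardinal, `U` a normal measure on `κ`, and
`U' = f_*(U)` (i.e. `U' ≤_RK U`) for some `f : κ → T`, then `U'` is principal or `U'`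
is isomorphic to `U`. -/
theorem rudin_keisler_below_normal (κ : Cardinal.{u}) (hκ : Cardinal.aleph0 ≤ κ)
    (U : Ultrafilter κ.ord.ToType) (hU : IsNormalMeasure κ U)
    {T : Type u} (f : κ.ord.ToType → T) (U' : Ultrafilter T) (hU' : U' = U.map f) :
    (∃ t : T, U' = pure t) ∨ UFIso U' U := by
  obtain ⟨-, -, hnorm⟩ := hU
  classical
  haveI : Nonempty κ.ord.ToType := Filter.nonempty_of_neBot (U : Filter κ.ord.ToType)
  set S : Set κ.ord.ToType := {ξ | ∃ η, η < ξ ∧ f η = f ξ} with hSdef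
  by_cases hSU : S ∈ U
  · left
    set g : κ.ord.ToType → κ.ord.ToType := fun ξ =>
      if h : ∃ η, η < ξ ∧ f η = f ξ then h.choose else ξ with hgdef
    have hg1 : ∀ ξ ∈ S, g ξ < ξ := by
      intro ξ hξ
      have hξ' : ∃ η, η < ξ ∧ f η = f ξ := hξ
      simp only [hgdef]
      rw [dif_pos hξ']
      exact hξ'.choose_spec.1
    have hg2 : ∀ ξ ∈ S, f (g ξ) = f ξ := by
      intro ξ hξ
      have hξ' : ∃ η, η < ξ ∧ f η = f ξ := hξ
      simp only [hgdef]
      rw [dif_pos hξ']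
      exact hξ'.choose_spec.2
    obtain ⟨c, hc⟩ := hnorm g (Filter.mem_of_superset hSU hg1)
    refine ⟨f c, ?_⟩
    have h1 : {ξ | f ξ = f c} ∈ U := by
      refine Filter.mem_of_superset (Filter.inter_mem hc hSU) ?_
      rintro ξ ⟨h1, h2⟩
      have := hg2 ξ h2
      rw [h1] at this
      exact this.symm
    have h2 : ({f c} : Set T) ∈ U' := by
      rw [hU', Ultrafilter.mem_map]
      exact Filter.mem_of_superset h1 (fun ξ hξ => hξ)
    apply Ultrafilter.coe_injective
    exact (Ultrafilter.neBot U').eq_pure_iff.2 h2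
  · right
    have hAc : Sᶜ ∈ U := (Ultrafilter.compl_mem_iff_notMem).2 hSU
    have hinj : Set.InjOn f Sᶜ := by
      intro x hx y hy hxy
      rcases lt_trichotomy x y with h | h | h
      · exact absurd ⟨x, h, hxy⟩ hy
      · exact h
      · exact absurd ⟨y, h, hxy.symm⟩ hx
    set h : T → κ.ord.ToType := fun t =>
      if ht : ∃ ξ, ξ ∈ Sᶜ ∧ f ξ = t then ht.choose else Classical.arbitrary _ with hhdef
    have hleft : ∀ ξ ∈ Sᶜ, h (f ξ) = ξ := by
      intro ξ hξ
      have he : ∃ η, η ∈ Sᶜ ∧ f η = f ξ := ⟨ξ, hξ, rfl⟩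
      simp only [hhdef, dif_pos he]
      exact hinj he.choose_spec.1 hξ he.choose_spec.2
    refine ⟨f '' Sᶜ, Sᶜ, h, ?_, hAc, ?_, ?_⟩
    · rw [hU', Ultrafilter.mem_map]
      exact Filter.mem_of_superset hAc (fun ξ hξ => ⟨ξ, hξ, rfl⟩)
    · refine ⟨?_, ?_, ?_⟩
      · rintro t ⟨ξ, hξ, rfl⟩
        rw [hleft ξ hξ]; exact hξ
      · rintro t ⟨ξ, hξ, rfl⟩ t' ⟨ξ', hξ', rfl⟩ htt'
        rw [hleft ξ hξ, hleft ξ' hξ'] at htt'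
        rw [htt']
      · intro ξ hξ
        exact ⟨f ξ, ⟨ξ, hξ, rfl⟩, hleft ξ hξ⟩
    · intro X hX
      have key : h '' X = f ⁻¹' X ∩ Sᶜ := by
        ext ξ
        constructor
        · rintro ⟨t, ht, rfl⟩
          obtain ⟨η, hη, rfl⟩ := hX ht
          rw [hleft η hη]
          exact ⟨ht, hη⟩
        · rintro ⟨h1, h2⟩
          exact ⟨f ξ, h1, hleft ξ h2⟩
      rw [hU', Ultrafilter.mem_map, key]
      constructor
      · intro hh; exact Filter.inter_mem hh hAc
      · intro hh; exact Filter.mem_of_superset hh Set.inter_subset_left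
end

section
/- Let κ be an infinite cardinal, I a nonempty set with |I| ≤ κ, U an ultrafilter on I, and for each i ∈ I let U_i be a normal measure on κ; suppose there is K ∈ U such that U_i ≠ U_j whenever i, j ∈ K and i ≠ j. If g is a function with domain I × κ that is not (U*⟨U_i : i ∈ I⟩)-equivalent to any function of the form (i,x) ↦ f(i) for a function f with domain I, then g is (U*⟨U_i : i ∈ I⟩)-equivalent to a one-to-one function. -/
universe u v

open Set Filter Cardinal

namespace SumUFAux

variable {κ : Cardinal.{u}}

lemma mk_ord_toType' (κ : Cardinal.{u}) : Cardinal.mk κ.ord.ToType = κ :=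
  Cardinal.mk_ord_toType κ

lemma mk_Iio_lt (ξ : κ.ord.ToType) : Cardinal.mk (Set.Iio ξ) < κ :=
  Cardinal.mk_Iio_ord_toType ξ

lemma mk_Iic_lt (hκ : Cardinal.aleph0 ≤ κ) (ξ : κ.ord.ToType) :
    Cardinal.mk (Set.Iic ξ) < κ := by
  calc Cardinal.mk (Set.Iic ξ) = Cardinal.mk (Set.Iio ξ ∪ {ξ} : Set _) := by
        rw [Set.Iio_union_right]
    _ ≤ Cardinal.mk (Set.Iio ξ) + Cardinal.mk ({ξ} : Set _) := Cardinal.mk_union_le _ _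
    _ = Cardinal.mk (Set.Iio ξ) + 1 := by rw [Cardinal.mk_singleton]
    _ < κ := Cardinal.add_lt_of_lt hκ (mk_Iio_lt ξ)
        (lt_of_lt_of_le Cardinal.one_lt_aleph0 hκ)

variable {V : Ultrafilter κ.ord.ToType}

lemma compl_small_mem (hC : UFComplete κ V) (hnp : ∀ x, ({x} : Set κ.ord.ToType) ∉ V)
    {S : Set κ.ord.ToType} (hS : Cardinal.mk S < κ) : Sᶜ ∈ V := by
  have h := hC S (fun x => ({(x : κ.ord.ToType)}ᶜ : Set _)) hS
    (fun x => (Ultrafilter.compl_mem_iff_notMem).2 (hnp x))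
  have he : (⋂ x : S, ({(x : κ.ord.ToType)}ᶜ : Set _)) = Sᶜ := by
    ext y
    simp only [Set.mem_iInter, Set.mem_compl_iff, Set.mem_singleton_iff, Subtype.forall]
    exact ⟨fun h hy => h y hy rfl, fun h x hx hxy => h (hxy ▸ hx)⟩
  rwa [he] at h

lemma small_not_mem (hC : UFComplete κ V) (hnp : ∀ x, ({x} : Set κ.ord.ToType) ∉ V)
    {S : Set κ.ord.ToType} (hS : Cardinal.mk S < κ) : S ∉ V :=
  (Ultrafilter.compl_mem_iff_notMem).1 (compl_small_mem hC hnp hS)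

lemma mem_mk_eq (hC : UFComplete κ V) (hnp : ∀ x, ({x} : Set κ.ord.ToType) ∉ V)
    {S : Set κ.ord.ToType} (hS : S ∈ V) : Cardinal.mk S = κ := by
  refine le_antisymm ?_ ?_
  · calc Cardinal.mk S ≤ Cardinal.mk κ.ord.ToType := Cardinal.mk_set_le S
      _ = κ := Cardinal.mk_ord_toType κ
  · by_contra h
    exact small_not_mem hC hnp (lt_of_not_ge h) hS

lemma constant_on (hN : IsNormalMeasure κ V) {X : Set κ.ord.ToType} (hX : X ∈ V)
    (f : κ.ord.ToType → κ.ord.ToType) (hf : ∀ α ∈ X, f α < α) :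
    ∃ c, {α | f α = c} ∩ X ∈ V := by
  classical
  set f' : κ.ord.ToType → κ.ord.ToType := fun α => if α ∈ X then f α else α with hf'
  have h1 : {ξ | f' ξ < ξ} ∈ V := by
    refine Filter.mem_of_superset hX (fun α hα => ?_)
    simp only [hf', Set.mem_setOf_eq, if_pos hα]
    exact hf α hα
  obtain ⟨c, hc⟩ := hN.2.2 f' h1
  refine ⟨c, ?_⟩
  refine Filter.mem_of_superset (Filter.inter_mem hc hX) ?_
  rintro α ⟨h2, h3⟩
  refine ⟨?_, h3⟩
  simp only [hf', if_pos h3, Set.mem_setOf_eq] at h2 ⊢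
  exact h2

lemma diagonal (hN : IsNormalMeasure κ V) (C : κ.ord.ToType → Set κ.ord.ToType)
    (hC : ∀ ξ, C ξ ∈ V) : {α | ∀ ξ, ξ < α → α ∈ C ξ} ∈ V := by
  classical
  by_contra hcon
  have hX : {α | ∀ ξ, ξ < α → α ∈ C ξ}ᶜ ∈ V := (Ultrafilter.compl_mem_iff_notMem).2 hcon
  have hXc : ∀ α ∈ {α | ∀ ξ, ξ < α → α ∈ C ξ}ᶜ, ∃ ξ, ξ < α ∧ α ∉ C ξ := by
    intro α hα
    simp only [Set.mem_compl_iff, Set.mem_setOf_eq, not_forall] at hα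
    obtain ⟨ξ, h1, h2⟩ := hα
    exact ⟨ξ, h1, h2⟩
  set f : κ.ord.ToType → κ.ord.ToType :=
    fun α => if h : ∃ ξ, ξ < α ∧ α ∉ C ξ then h.choose else α with hfdef
  have hfspec : ∀ α (h : ∃ ξ, ξ < α ∧ α ∉ C ξ), f α < α ∧ α ∉ C (f α) := by
    intro α h
    have h1 : f α = h.choose := dif_pos h
    rw [h1]
    exact ⟨h.choose_spec.1, h.choose_spec.2⟩
  have hreg : ∀ α ∈ {α | ∀ ξ, ξ < α → α ∈ C ξ}ᶜ, f α < α := fun α hα =>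
    (hfspec α (hXc α hα)).1
  obtain ⟨c, hc⟩ := constant_on hN hX f hreg
  have h2 := Filter.inter_mem hc (hC c)
  obtain ⟨α, ⟨⟨h3, h4⟩, h5⟩⟩ := Filter.nonempty_of_mem h2
  have h6 := (hfspec α (hXc α h4)).2
  rw [h3] at h6
  exact h6 h5

lemma dichotomy (hN : IsNormalMeasure κ V) {Z : Type*} (gi : κ.ord.ToType → Z)
    (h : ¬ ∃ c, {x | gi x = c} ∈ V) :
    ∃ A ∈ V, Set.InjOn gi A := by
  classical
  by_cases hX : {α | ∃ β, β < α ∧ gi β = gi α} ∈ V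
  · exfalso
    set f : κ.ord.ToType → κ.ord.ToType :=
      fun α => if h : ∃ β, β < α ∧ gi β = gi α then h.choose else α with hfdef
    have hfspec : ∀ α (h : ∃ β, β < α ∧ gi β = gi α), f α < α ∧ gi (f α) = gi α := by
      intro α h
      have h1 : f α = h.choose := dif_pos h
      rw [h1]
      exact ⟨h.choose_spec.1, h.choose_spec.2⟩
    have hreg : ∀ α ∈ {α | ∃ β, β < α ∧ gi β = gi α}, f α < α := by
      intro α hα
      rw [Set.mem_setOf_eq] at hα
      exact (hfspec α hα).1
    obtain ⟨c, hc⟩ := constant_on hN hX f hreg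
    refine h ⟨gi c, Filter.mem_of_superset hc ?_⟩
    rintro α ⟨h1, h2⟩
    rw [Set.mem_setOf_eq] at h1 h2
    have h3 : gi (f α) = gi α := (hfspec α h2).2
    show gi α = gi c
    rw [← h3, h1]
  · refine ⟨_, (Ultrafilter.compl_mem_iff_notMem).2 hX, ?_⟩
    intro α hα β hβ heq
    by_contra hne
    rcases lt_trichotomy α β with h1 | h1 | h1
    · exact hβ ⟨α, h1, heq⟩
    · exact hne h1
    · exact hα ⟨β, h1, heq.symm⟩

lemma separation {V1 V2 : Ultrafilter κ.ord.ToType} (hN1 : IsNormalMeasure κ V1)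
    (hN2 : IsNormalMeasure κ V2) (hne : V1 ≠ V2) {Z : Type*}
    (a b : κ.ord.ToType → Z) {B : Set κ.ord.ToType} (hB : B ∈ V2) (hb : Set.InjOn b B) :
    ∃ E F, E ∈ V1 ∧ F ∈ V2 ∧ ∀ x ∈ E, ∀ y ∈ F, a x ≠ b y := by
  classical
  by_cases hD : {x | ∃ y ∈ B, b y = a x} ∈ V1
  · set ψ : κ.ord.ToType → κ.ord.ToType :=
      fun x => if h : ∃ y ∈ B, b y = a x then h.choose else x with hψdef
    have hψ : ∀ x ∈ {x | ∃ y ∈ B, b y = a x}, ψ x ∈ B ∧ b (ψ x) = a x := by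
      intro x hx
      rw [Set.mem_setOf_eq] at hx
      have h1 : ψ x = hx.choose := dif_pos hx
      rw [h1]
      exact ⟨hx.choose_spec.1, hx.choose_spec.2⟩
    by_cases hpush : ∃ D : Set κ.ord.ToType, ψ ⁻¹' D ∈ V1 ∧ D ∉ V2
    · obtain ⟨D, h1, h2⟩ := hpush
      refine ⟨{x | ∃ y ∈ B, b y = a x} ∩ ψ ⁻¹' D, B ∩ Dᶜ, Filter.inter_mem hD h1,
        Filter.inter_mem hB ((Ultrafilter.compl_mem_iff_notMem).2 h2), ?_⟩
      rintro x ⟨hxD, hxP⟩ y ⟨hyB, hyD⟩ heq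
      have h3 := hψ x hxD
      have h4 : ψ x = y := hb h3.1 hyB (h3.2.trans heq)
      exact hyD (h4 ▸ hxP)
    · push_neg at hpush
      exfalso
      by_cases hL : {x | ψ x < x} ∈ V1
      · obtain ⟨c, hc⟩ := hN1.2.2 ψ hL
        exact hN2.2.1 c (hpush {c} (Filter.mem_of_superset hc (fun α hα => hα)))
      · by_cases hEq : {x | ψ x = x} ∈ V1
        · refine hne (Ultrafilter.coe_injective (Filter.ext fun D => ?_))
          have hmono : ∀ D : Set κ.ord.ToType, D ∈ V1 → D ∈ V2 := by
            intro D hD'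
            refine hpush D (Filter.mem_of_superset (Filter.inter_mem hD' hEq) ?_)
            rintro α ⟨h1, h2⟩
            show ψ α ∈ D
            rwa [show ψ α = α from h2]
          constructor
          · exact hmono D
          · intro hD2
            by_contra hD1
            have := hmono Dᶜ ((Ultrafilter.compl_mem_iff_notMem).2 hD1)
            exact ((Ultrafilter.compl_mem_iff_notMem).1 this) hD2
        · have hGt : {x | x < ψ x} ∈ V1 := by
            have h1 : {x | ψ x < x}ᶜ ∈ V1 := (Ultrafilter.compl_mem_iff_notMem).2 hL
            have h2 : {x | ψ x = x}ᶜ ∈ V1 := (Ultrafilter.compl_mem_iff_notMem).2 hEq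
            refine Filter.mem_of_superset (Filter.inter_mem h1 h2) ?_
            rintro α ⟨h3, h4⟩
            rw [Set.mem_compl_iff, Set.mem_setOf_eq] at h3 h4
            exact lt_of_le_of_ne (not_lt.1 h3) (fun h => h4 h.symm)
          set S' := {x | x < ψ x} ∩ {x | ∃ y ∈ B, b y = a x} with hS'def
          have hS' : S' ∈ V1 := Filter.inter_mem hGt hD
          have hIm : ψ '' S' ∈ V2 :=
            hpush _ (Filter.mem_of_superset hS' (Set.subset_preimage_image ψ S'))
          set χ : κ.ord.ToType → κ.ord.ToType :=
            fun y => if h : ∃ x ∈ S', ψ x = y then h.choose else y with hχdef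
          have hχ : ∀ y ∈ ψ '' S', χ y ∈ S' ∧ ψ (χ y) = y := by
            intro y hy
            obtain ⟨x, hx, hxy⟩ := hy
            have h : ∃ x ∈ S', ψ x = y := ⟨x, hx, hxy⟩
            have h1 : χ y = h.choose := dif_pos h
            rw [h1]
            exact ⟨h.choose_spec.1, h.choose_spec.2⟩
          have hreg : ∀ y ∈ ψ '' S', χ y < y := by
            intro y hy
            have h := hχ y hy
            have h2 : χ y < ψ (χ y) := h.1.1
            rwa [h.2] at h2
          obtain ⟨c, hc⟩ := constant_on hN2 hIm χ hreg
          refine hN2.2.1 (ψ c) (Filter.mem_of_superset hc ?_)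
          rintro y ⟨h1, h2⟩
          have h3 := (hχ y h2).2
          rw [Set.mem_setOf_eq] at h1
          rw [h1] at h3
          exact h3.symm
  · refine ⟨{x | ∃ y ∈ B, b y = a x}ᶜ, B, (Ultrafilter.compl_mem_iff_notMem).2 hD, hB, ?_⟩
    intro x hx y hy heq
    exact hx ⟨y, hy, heq.symm⟩

lemma split_set (hκ : Cardinal.aleph0 ≤ κ) {S : Set κ.ord.ToType}
    (hS : Cardinal.mk S = κ) :
    ∃ P ⊆ S, Cardinal.mk P = κ ∧ Cardinal.mk (S \ P : Set _) = κ := by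
  have h1 : Cardinal.mk (S ⊕ S : Type u) = Cardinal.mk S := by
    simp only [Cardinal.mk_sum, Cardinal.lift_id, hS]
    exact Cardinal.add_eq_self hκ
  obtain ⟨f⟩ := Cardinal.eq.1 h1
  set u : S → κ.ord.ToType := fun x => (f (Sum.inl x) : κ.ord.ToType) with hu
  set w : S → κ.ord.ToType := fun x => (f (Sum.inr x) : κ.ord.ToType) with hw
  have hui : Function.Injective u := by
    intro x y hxy
    have := Subtype.val_injective hxy
    exact Sum.inl_injective (f.injective this)
  have hwi : Function.Injective w := by
    intro x y hxy
    have := Subtype.val_injective hxy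
    exact Sum.inr_injective (f.injective this)
  refine ⟨Set.range u, ?_, ?_, ?_⟩
  · rintro x ⟨y, rfl⟩
    exact (f (Sum.inl y)).2
  · rw [Cardinal.mk_range_eq u hui, hS]
  · refine le_antisymm ?_ ?_
    · calc Cardinal.mk (S \ Set.range u : Set _) ≤ Cardinal.mk S :=
          Cardinal.mk_le_mk_of_subset (Set.diff_subset)
        _ = κ := hS
    · have hsub : Set.range w ⊆ S \ Set.range u := by
        rintro x ⟨y, rfl⟩
        refine ⟨(f (Sum.inr y)).2, ?_⟩
        rintro ⟨z, hz⟩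
        have := Subtype.val_injective hz
        exact Sum.inl_ne_inr (f.injective this)
      have h5 : Cardinal.mk (Set.range w) = κ := (Cardinal.mk_range_eq w hwi).trans hS
      calc κ = Cardinal.mk (Set.range w) := h5.symm
        _ ≤ Cardinal.mk (S \ Set.range u : Set _) := Cardinal.mk_le_mk_of_subset hsub

end SumUFAux

/-- Let `κ` be an infinite cardinal, `I` nonempty with `|I| ≤ κ`, `U` an
ultrafilter on `I`, and `U_i` normal measures on `κ` which are pairwise distinct on some
`K ∈ U`.  Let `W = U*⟨U_i : i ∈ I⟩` be the sum ultrafilter on `I × κ`.  If `g` with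
domain `I × κ` is not `W`-equivalent to any function of the form `(i,x) ↦ f(i)`, then
`g` is `W`-equivalent to a one-to-one function. -/
theorem sum_ultrafilter_classification (κ : Cardinal.{u}) (hκ : Cardinal.aleph0 ≤ κ)
    {I : Type u} [Nonempty I] (hI : Cardinal.mk I ≤ κ)
    (U : Ultrafilter I) (Ui : I → Ultrafilter κ.ord.ToType)
    (hnormal : ∀ i, IsNormalMeasure κ (Ui i))
    (hK : ∃ K ∈ U, Set.InjOn Ui K)
    (W : Ultrafilter (I × κ.ord.ToType))
    (hW : ∀ T : Set (I × κ.ord.ToType), T ∈ W ↔ {i : I | {x | (i, x) ∈ T} ∈ Ui i} ∈ U)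
    {Y : Type v} (g : I × κ.ord.ToType → Y)
    (hg : ¬ ∃ f : I → Y, {p : I × κ.ord.ToType | g p = f p.1} ∈ W) :
    ∃ h : I × κ.ord.ToType → Y, Function.Injective h ∧ {p | g p = h p} ∈ W := by
  classical
  obtain ⟨K, hKU, hKinj⟩ := hK
  haveI hO : Nonempty κ.ord.ToType := by
    rw [← Cardinal.mk_ne_zero_iff, Cardinal.mk_ord_toType]
    exact ne_of_gt (lt_of_lt_of_le Cardinal.aleph0_pos hκ)
  -- Step 1: on a U-large set, g is not fiberwise constant
  have hnocst : {i | ∃ c, {x | g (i, x) = c} ∈ Ui i} ∉ U := by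
    intro hS
    apply hg
    set f : I → Y := fun i => if h : ∃ c, {x | g (i, x) = c} ∈ Ui i then h.choose
      else g (i, Classical.arbitrary _) with hfdef
    refine ⟨f, ?_⟩
    rw [hW]
    refine Filter.mem_of_superset hS fun i hi => ?_
    rw [Set.mem_setOf_eq] at hi
    have h1 : f i = hi.choose := dif_pos hi
    show {x | g (i, x) = f i} ∈ Ui i
    rw [h1]
    exact hi.choose_spec
  have hScm : {i | ∃ c, {x | g (i, x) = c} ∈ Ui i}ᶜ ∈ U :=
    (Ultrafilter.compl_mem_iff_notMem).2 hnocst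
  set G : Set I := K ∩ {i | ∃ c, {x | g (i, x) = c} ∈ Ui i}ᶜ with hGdef
  have hGU : G ∈ U := Filter.inter_mem hKU hScm
  -- Step 2: fiberwise injectivity sets
  have hAex : ∀ i : I, ∃ A : Set κ.ord.ToType,
      i ∈ G → (A ∈ Ui i ∧ Set.InjOn (fun x => g (i, x)) A) := by
    intro i
    by_cases h : i ∈ G
    · obtain ⟨A, h1, h2⟩ := SumUFAux.dichotomy (hnormal i) (fun x => g (i, x)) h.2
      exact ⟨A, fun _ => ⟨h1, h2⟩⟩
    · exact ⟨∅, fun h' => absurd h' h⟩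
  choose A hA using hAex
  -- Step 3: pairwise separation of images
  have hEFex : ∀ i j : I, ∃ E F : Set κ.ord.ToType,
      i ∈ G → j ∈ G → i ≠ j →
        (E ∈ Ui i ∧ F ∈ Ui j ∧ ∀ x ∈ E, ∀ y ∈ F, g (i, x) ≠ g (j, y)) := by
    intro i j
    by_cases hc : i ∈ G ∧ j ∈ G ∧ i ≠ j
    · obtain ⟨hi, hj, hij⟩ := hc
      have hne : Ui i ≠ Ui j := fun hUeq => hij (hKinj hi.1 hj.1 hUeq)
      obtain ⟨E, F, h1, h2, h3⟩ := SumUFAux.separation (hnormal i) (hnormal j) hne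
        (fun x => g (i, x)) (fun y => g (j, y)) (hA j hj).1 (hA j hj).2
      exact ⟨E, F, fun _ _ _ => ⟨h1, h2, h3⟩⟩
    · exact ⟨∅, ∅, fun h1 h2 h3 => absurd ⟨h1, h2, h3⟩ hc⟩
  choose EE FF hEF using hEFex
  -- Step 4: embed I into the ordinals below κ
  obtain ⟨e⟩ : Nonempty (I ↪ κ.ord.ToType) := by
    refine (Cardinal.le_def I κ.ord.ToType).1 ?_
    rw [Cardinal.mk_ord_toType]
    exact hI
  -- Step 5: the small "bad" sets of bounded conflicts
  set Bad : I → κ.ord.ToType → Set κ.ord.ToType := fun i ξ =>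
    {α | α ∈ A i ∧ ∃ j x, j ∈ G ∧ j ≠ i ∧ e j ≤ ξ ∧ x ≤ ξ ∧ g (j, x) = g (i, α)}
    with hBadDef
  have hBadSmall : ∀ i ∈ G, ∀ ξ, Cardinal.mk (Bad i ξ) < κ := by
    intro i hi ξ
    have hw : ∀ α : Bad i ξ, ∃ p : I × κ.ord.ToType,
        p.1 ∈ G ∧ p.1 ≠ i ∧ e p.1 ≤ ξ ∧ p.2 ≤ ξ ∧ g p = g (i, (α : κ.ord.ToType)) := by
      rintro ⟨α, hα⟩
      simp only [hBadDef, Set.mem_setOf_eq] at hα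
      obtain ⟨-, j, x, h1, h2, h3, h4, h5⟩ := hα
      exact ⟨(j, x), h1, h2, h3, h4, h5⟩
    choose w hw1 hw2 hw3 hw4 hw5 using hw
    have hmemA : ∀ α : Bad i ξ, (α : κ.ord.ToType) ∈ A i := by
      rintro ⟨α, hα⟩
      simp only [hBadDef, Set.mem_setOf_eq] at hα
      exact hα.1
    have hinj : Function.Injective (fun α : Bad i ξ =>
        ((⟨e (w α).1, hw3 α⟩ : Set.Iic ξ), (⟨(w α).2, hw4 α⟩ : Set.Iic ξ))) := by
      intro α β hαβ
      simp only [Prod.mk.injEq, Subtype.mk.injEq] at hαβ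
      have h1 : (w α).1 = (w β).1 := e.injective (congrArg Subtype.val hαβ.1)
      have h2 : w α = w β := Prod.ext h1 (congrArg Subtype.val hαβ.2)
      have h3 : g (i, (α : κ.ord.ToType)) = g (i, (β : κ.ord.ToType)) := by
        rw [← hw5 α, ← hw5 β, h2]
      exact Subtype.ext ((hA i hi).2 (hmemA α) (hmemA β) h3)
    calc Cardinal.mk (Bad i ξ) ≤ Cardinal.mk ((Set.Iic ξ × Set.Iic ξ : Type u)) :=
        Cardinal.mk_le_of_injective hinj
      _ = Cardinal.mk (Set.Iic ξ) * Cardinal.mk (Set.Iic ξ) := by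
        rw [Cardinal.mk_prod, Cardinal.lift_id]
      _ < κ := Cardinal.mul_lt_of_lt hκ (SumUFAux.mk_Iic_lt hκ ξ)
          (SumUFAux.mk_Iic_lt hκ ξ)
  have hBadc : ∀ i ∈ G, ∀ ξ, (Bad i ξ)ᶜ ∈ Ui i := fun i hi ξ =>
    SumUFAux.compl_small_mem (hnormal i).1 (hnormal i).2.1 (hBadSmall i hi ξ)
  -- Step 6: the pairwise-separation coordinate sets
  set PP : I → κ.ord.ToType → Set κ.ord.ToType := fun i ξ =>
    {α | ∀ j, j ∈ G → j ≠ i → e j = ξ → α ∈ EE i j ∧ α ∈ FF j i} with hPPdef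
  have hPPmem : ∀ i ∈ G, ∀ ξ, PP i ξ ∈ Ui i := by
    intro i hi ξ
    by_cases hex : ∃ j, j ∈ G ∧ j ≠ i ∧ e j = ξ
    · obtain ⟨j0, hj0G, hj0i, hj0e⟩ := hex
      have h1 : EE i j0 ∈ Ui i := (hEF i j0 hi hj0G (Ne.symm hj0i)).1
      have h2 : FF j0 i ∈ Ui i := (hEF j0 i hj0G hi hj0i).2.1
      refine Filter.mem_of_superset (Filter.inter_mem h1 h2) ?_
      rintro α ⟨hα1, hα2⟩
      intro j hjG hji hje
      have hjj : j = j0 := e.injective (hje.trans hj0e.symm)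
      subst hjj
      exact ⟨hα1, hα2⟩
    · refine Filter.mem_of_superset Filter.univ_mem ?_
      intro α _ j hjG hji hje
      exact absurd ⟨j, hjG, hji, hje⟩ hex
  set Cs : I → κ.ord.ToType → Set κ.ord.ToType := fun i ξ => PP i ξ ∩ (Bad i ξ)ᶜ
    with hCsdef
  have hCmem : ∀ i ∈ G, ∀ ξ, Cs i ξ ∈ Ui i := fun i hi ξ =>
    Filter.inter_mem (hPPmem i hi ξ) (hBadc i hi ξ)
  -- Step 7: the good sets B i and the set T
  set B : I → Set κ.ord.ToType := fun i =>
    A i ∩ Set.Ioi (e i) ∩ {α | ∀ ξ, ξ < α → α ∈ Cs i ξ} with hBdef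
  have hBmem : ∀ i ∈ G, B i ∈ Ui i := by
    intro i hi
    refine Filter.inter_mem (Filter.inter_mem (hA i hi).1 ?_) ?_
    · have h1 := SumUFAux.compl_small_mem (hnormal i).1 (hnormal i).2.1
        (SumUFAux.mk_Iic_lt hκ (e i))
      rwa [Set.compl_Iic] at h1
    · exact SumUFAux.diagonal (hnormal i) _ (hCmem i hi)
  set T : Set (I × κ.ord.ToType) := {p | p.1 ∈ G ∧ p.2 ∈ B p.1} with hTdef
  have hTW : T ∈ W := by
    rw [hW]
    refine Filter.mem_of_superset hGU fun i hi => ?_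
    rw [Set.mem_setOf_eq]
    exact Filter.mem_of_superset (hBmem i hi) fun x hx => ⟨hi, hx⟩
  -- Step 8: g is injective on T
  have hTinj : Set.InjOn g T := by
    rintro ⟨i, x⟩ ⟨hiG, hxB⟩ ⟨j, y⟩ ⟨hjG, hyB⟩ heq
    obtain ⟨⟨hxA, hxe⟩, hxdiag⟩ := hxB
    obtain ⟨⟨hyA, hye⟩, hydiag⟩ := hyB
    by_cases hij : i = j
    · subst hij
      have hxy := (hA i hiG).2 hxA hyA heq
      exact congrArg (Prod.mk i) hxy
    · exfalso
      rcases le_or_gt x (e j) with h1 | h1 <;> rcases le_or_gt y (e i) with h2 | h2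
      · exact absurd ((lt_of_lt_of_le hxe h1).trans (lt_of_lt_of_le hye h2))
          (lt_irrefl _)
      · have hξ : max x (e i) < y := max_lt (lt_of_le_of_lt h1 hye) h2
        exact (hydiag (max x (e i)) hξ).2
          ⟨hyA, i, x, hiG, hij, le_max_right _ _, le_max_left _ _, heq⟩
      · have hξ : max y (e j) < x := max_lt (lt_of_le_of_lt h2 hxe) h1
        exact (hxdiag (max y (e j)) hξ).2
          ⟨hxA, j, y, hjG, fun h => hij h.symm, le_max_right _ _, le_max_left _ _,
            heq.symm⟩
      · have h3 := (hxdiag (e j) h1).1 j hjG (fun h => hij h.symm) rfl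
        have h4 := (hydiag (e i) h2).1 i hiG hij rfl
        exact (hEF i j hiG hjG hij).2.2 x h3.1 y h4.2 heq
  -- Step 9: shrink T so that the complement can be injected into leftover values
  have hGne : G.Nonempty := Filter.nonempty_of_mem (f := (U : Filter I)) hGU
  obtain ⟨i₀, hi₀⟩ := hGne
  have hBi₀κ : Cardinal.mk (B i₀) = κ :=
    SumUFAux.mem_mk_eq (hnormal i₀).1 (hnormal i₀).2.1 (hBmem i₀ hi₀)
  obtain ⟨P, hPsub, hPκ, hPcκ⟩ := SumUFAux.split_set hκ hBi₀κ
  obtain ⟨Q, hQsub, hQκ, hQrem⟩ :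
      ∃ Q ⊆ B i₀, Cardinal.mk Q = κ ∧ (B i₀) \ Q ∈ Ui i₀ := by
    by_cases hP : P ∈ Ui i₀
    · refine ⟨B i₀ \ P, Set.diff_subset, hPcκ, ?_⟩
      refine Filter.mem_of_superset hP fun x hx => ?_
      exact ⟨hPsub hx, fun h => h.2 hx⟩
    · refine ⟨P, hPsub, hPκ, ?_⟩
      rw [Set.diff_eq]
      exact Filter.inter_mem (hBmem i₀ hi₀) ((Ultrafilter.compl_mem_iff_notMem).2 hP)
  set T' : Set (I × κ.ord.ToType) := {p | p ∈ T ∧ ¬(p.1 = i₀ ∧ p.2 ∈ Q)} with hT'def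
  have hT'W : T' ∈ W := by
    rw [hW]
    refine Filter.mem_of_superset hGU fun i hi => ?_
    rw [Set.mem_setOf_eq]
    by_cases hii : i = i₀
    · subst hii
      refine Filter.mem_of_superset hQrem ?_
      rintro x ⟨hx1, hx2⟩
      exact ⟨⟨hi, hx1⟩, fun h => hx2 h.2⟩
    · exact Filter.mem_of_superset (hBmem i hi) fun x hx =>
        ⟨⟨hi, hx⟩, fun h => hii h.1⟩
  have hT'T : T' ⊆ T := fun p hp => hp.1
  -- the removed rectangle
  set Rd : Set (I × κ.ord.ToType) := {p | p.1 = i₀ ∧ p.2 ∈ Q} with hRdDef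
  have hRdT : Rd ⊆ T := by
    rintro ⟨i, x⟩ ⟨h1, h2⟩
    dsimp only at h1 h2
    subst h1
    exact ⟨hi₀, hQsub h2⟩
  have hRdκ : Cardinal.mk Rd = κ := by
    have hmap : Rd = (fun x : κ.ord.ToType => ((i₀, x) : I × κ.ord.ToType)) '' Q := by
      ext ⟨i, x⟩
      constructor
      · rintro ⟨h1, h2⟩
        exact ⟨x, h2, by rw [show i = i₀ from h1]⟩
      · rintro ⟨y, hy, heq⟩
        cases heq
        exact ⟨rfl, hy⟩
    rw [hmap, Cardinal.mk_image_eq (fun a b hab => (Prod.ext_iff.1 hab).2), hQκ]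
  have hCle : Cardinal.mk (T'ᶜ : Set (I × κ.ord.ToType)) ≤ κ := by
    calc Cardinal.mk (T'ᶜ : Set (I × κ.ord.ToType)) ≤ Cardinal.mk (I × κ.ord.ToType) :=
        Cardinal.mk_set_le _
      _ = Cardinal.mk I * κ := by
        rw [Cardinal.mk_prod, Cardinal.lift_id, Cardinal.lift_id,
          Cardinal.mk_ord_toType]
      _ ≤ κ * κ := mul_le_mul_left hI κ
      _ = κ := Cardinal.mul_eq_self hκ
  obtain ⟨emb1⟩ : Nonempty ((T'ᶜ : Set (I × κ.ord.ToType)) ↪ Rd) :=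
    (Cardinal.le_def _ _).1 (hCle.trans_eq hRdκ.symm)
  have hRdinj : Set.InjOn g Rd := hTinj.mono hRdT
  -- key disjointness
  have hkey : ∀ p ∈ T', ∀ q : (T'ᶜ : Set (I × κ.ord.ToType)),
      g p ≠ g (emb1 q) := by
    intro p hp q heq
    have h1 : ((emb1 q : I × κ.ord.ToType)) ∈ Rd := (emb1 q).2
    have h2 : ((emb1 q : I × κ.ord.ToType)) ∈ T := hRdT h1
    have h3 := hTinj (hT'T hp) h2 heq
    have h4 : ((emb1 q : I × κ.ord.ToType)) ∉ T' := fun hh => hh.2 h1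
    rw [h3] at hp
    exact h4 hp
  -- Step 10: assemble the injective function
  refine ⟨fun p => if hp : p ∈ T' then g p else g (emb1 ⟨p, hp⟩), ?_, ?_⟩
  · intro p q hpq
    dsimp only at hpq
    by_cases hp : p ∈ T' <;> by_cases hq : q ∈ T'
    · rw [dif_pos hp, dif_pos hq] at hpq
      exact hTinj (hT'T hp) (hT'T hq) hpq
    · rw [dif_pos hp, dif_neg hq] at hpq
      exact absurd hpq (hkey p hp ⟨q, hq⟩)
    · rw [dif_neg hp, dif_pos hq] at hpq
      exact absurd hpq.symm (hkey q hq ⟨p, hp⟩)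
    · rw [dif_neg hp, dif_neg hq] at hpq
      have h1 := hRdinj (emb1 ⟨p, hp⟩).2 (emb1 ⟨q, hq⟩).2 hpq
      have h2 : emb1 ⟨p, hp⟩ = emb1 ⟨q, hq⟩ := Subtype.ext h1
      have h3 := emb1.injective h2
      exact congrArg Subtype.val h3
  · refine Filter.mem_of_superset hT'W fun p hp => ?_
    show g p = if hp : p ∈ T' then g p else g ↑(emb1 ⟨p, hp⟩)
    rw [dif_pos hp]
end

section
/- Let ⟨λ_n : n < ω⟩ be a nondecreasing sequence of infinite cardinals, and let ⟨π_n : n < ω⟩ and ⟨D_n : 1 ≤ n < ω⟩ satisfy: (1) π_0 = D_1 is a normal measure on λ_0; (2) for 0 < i < ω, D_i is an ultrafilter on λ_0 × ⋯ × λ_{i-1}, and π_i is a function with domain λ_0 × ⋯ × λ_{i-1} such that for some K ∈ D_i the restriction π_i ↾ K is one-to-one and all values of π_i are normal measures on λ_i; (3) D_{i+1} = D_i * π_i, the sum of D_i with the family of ultrafilters ⟨π_i(x) : x ∈ λ_0 × ⋯ × λ_{i-1}⟩, identifying λ_0 × ⋯ × λ_i with the disjoint sum ⊕_x λ_i. Then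 for every n ≥ 1 and every function f with domain λ_0 × ⋯ × λ_{n-1}, either f is D_n-equivalent to a one-to-one function, or there exist k < n and a function h with domain λ_0 × ⋯ × λ_{k-1} (a constant when k = 0) such that f is D_n-equivalent to the function (x_0, …, x_{n-1}) ↦ h(x_0, …, x_{k-1}). -/
universe u v

/-- The product `λ_0 × ⋯ × λ_n`, realized as the type of tuples
`∀ i : Fin (n+1), (λ_i).ord.ToType`. -/
abbrev Tup (lam : ℕ → Cardinal.{u}) (n : ℕ) : Type u :=
  ∀ i : Fin n, (lam i).ord.ToType

namespace ClassAux

open Cardinal Set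

variable {κ : Cardinal.{u}}

theorem tup_nonempty (lam : ℕ → Cardinal.{u}) (hinf : ∀ n, Cardinal.aleph0 ≤ lam n)
    (k : ℕ) : Nonempty ((lam k).ord.ToType) := by
  rw [Ordinal.toType_nonempty_iff_ne_zero]
  intro h
  have h2 : lam k = 0 := by
    have h2' := congrArg Ordinal.card h
    rwa [Cardinal.card_ord, Ordinal.card_zero] at h2'
  have h3 := hinf k
  rw [h2] at h3
  exact absurd h3 Cardinal.aleph0_pos.not_ge

/-- small sets are not in a complete nonprincipal ultrafilter -/
theorem small_not_mem {U : Ultrafilter κ.ord.ToType} (hU : IsNormalMeasure κ U)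
    (A : Set κ.ord.ToType) (hA : #A < κ) : A ∉ U := by
  rw [← Ultrafilter.compl_mem_iff_notMem]
  have : Aᶜ = ⋂ a : A, ({(a : κ.ord.ToType)}ᶜ) := by
    ext z
    simp only [Set.mem_compl_iff, Set.mem_iInter, Set.mem_compl_iff, Set.mem_singleton_iff]
    constructor
    · rintro hz ⟨a, ha⟩ rfl; exact hz ha
    · intro h hz; exact h ⟨z, hz⟩ rfl
  rw [this]
  exact hU.1 A (fun a => ({(a : κ.ord.ToType)}ᶜ)) hA
    (fun a => Ultrafilter.compl_mem_iff_notMem.2 (hU.2.1 a))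

theorem card_le_of_mem {U : Ultrafilter κ.ord.ToType} (hU : IsNormalMeasure κ U)
    {A : Set κ.ord.ToType} (hA : A ∈ U) : κ ≤ #A := by
  by_contra h
  exact small_not_mem hU A (lt_of_not_ge h) hA

/-- initial segments are small -/
theorem card_Iic_lt (hκ : Cardinal.aleph0 ≤ κ) (x : κ.ord.ToType) :
    #{y : κ.ord.ToType | y ≤ x} < κ := by
  haveI : IsWellOrder κ.ord.ToType (· < ·) := isWellOrder_lt
  have h1 : #{y : κ.ord.ToType | y < x} < κ := by
    have := Cardinal.card_typein_lt (α := κ.ord.ToType) (r := (· < ·)) x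
      (by rw [Cardinal.mk_ord_toType, Ordinal.type_toType])
    rw [Cardinal.mk_ord_toType] at this
    calc #{y : κ.ord.ToType | y < x} = (Ordinal.typein (· < ·) x).card := by
          rw [Ordinal.card_typein]; rfl
      _ < κ := this
  have : {y : κ.ord.ToType | y ≤ x} = insert x {y : κ.ord.ToType | y < x} := by
    ext z; simp [le_iff_lt_or_eq]; tauto
  rw [this]
  calc #(insert x {y : κ.ord.ToType | y < x} : Set _) ≤ #{y : κ.ord.ToType | y < x} + 1 :=
        Cardinal.mk_insert_le
    _ < κ := by
        have : (1 : Cardinal) < κ := lt_of_lt_of_le Cardinal.one_lt_aleph0 hκ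
        exact Cardinal.add_lt_of_lt hκ h1 this

theorem tail_mem (hκ : Cardinal.aleph0 ≤ κ) {U : Ultrafilter κ.ord.ToType}
    (hU : IsNormalMeasure κ U) (x : κ.ord.ToType) : {y | x < y} ∈ U := by
  have h := small_not_mem hU {y | y ≤ x} (card_Iic_lt hκ x)
  have : {y : κ.ord.ToType | x < y} = {y | y ≤ x}ᶜ := by ext z; simp
  rw [this]
  exact Ultrafilter.compl_mem_iff_notMem.2 h

/-- diagonal intersection -/
theorem diag_mem {U : Ultrafilter κ.ord.ToType} (hU : IsNormalMeasure κ U)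
    (G : κ.ord.ToType → Set κ.ord.ToType) (hG : ∀ α, G α ∈ U) :
    {y | ∀ α, α < y → y ∈ G α} ∈ U := by
  by_contra h
  have hc : {y : κ.ord.ToType | ∀ α, α < y → y ∈ G α}ᶜ ∈ U :=
    Ultrafilter.compl_mem_iff_notMem.2 h
  have hc' : {y : κ.ord.ToType | ∃ α, α < y ∧ y ∉ G α} ∈ U := by
    have : {y : κ.ord.ToType | ∀ α, α < y → y ∈ G α}ᶜ = {y | ∃ α, α < y ∧ y ∉ G α} := by
      ext z; simp [not_forall]
    rwa [this] at hc
  classical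
  set g : κ.ord.ToType → κ.ord.ToType := fun y =>
    if hy : ∃ α, α < y ∧ y ∉ G α then hy.choose else y with hg
  have hreg : {ξ | g ξ < ξ} ∈ U := by
    refine Filter.mem_of_superset hc' ?_
    intro y hy
    simp only [Set.mem_setOf_eq] at hy ⊢
    rw [hg]; simp only [dif_pos hy]; exact hy.choose_spec.1
  obtain ⟨c, hcU⟩ := hU.2.2 g hreg
  have : ({ξ | g ξ = c} ∩ {y | ∃ α, α < y ∧ y ∉ G α} ∩ G c : Set _).Nonempty :=
    Ultrafilter.nonempty_of_mem (Filter.inter_mem (Filter.inter_mem hcU hc') (hG c))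
  obtain ⟨y, ⟨hy1, hy2⟩, hy3⟩ := this
  simp only [Set.mem_setOf_eq] at hy1 hy2
  rw [hg] at hy1; simp only [dif_pos hy2] at hy1
  exact (hy1 ▸ hy2.choose_spec.2) hy3

/-- dichotomy for a normal measure: every function is injective on a set or constant on a set -/
theorem dichotomy {U : Ultrafilter κ.ord.ToType} (hU : IsNormalMeasure κ U)
    {Y : Type v} (f : κ.ord.ToType → Y) :
    (∃ A ∈ U, Set.InjOn f A) ∨ (∃ c, {ξ | f ξ = c} ∈ U) := by
  by_cases hcon : ∃ c, {ξ | f ξ = c} ∈ U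
  · exact Or.inr hcon
  left
  classical
  have wf : WellFounded ((· < ·) : κ.ord.ToType → κ.ord.ToType → Prop) :=
    wellFounded_lt
  set g : κ.ord.ToType → κ.ord.ToType := fun ξ =>
    wf.min {η | f η = f ξ} ⟨ξ, rfl⟩ with hg
  have hgfib : ∀ ξ, f (g ξ) = f ξ := fun ξ => wf.min_mem {η | f η = f ξ} ⟨ξ, rfl⟩
  have hgle : ∀ ξ, ¬ ξ < g ξ := fun ξ => wf.not_lt_min {η | f η = f ξ} (x := ξ) rfl
  have hsame : ∀ ξ η, f ξ = f η → g ξ = g η := by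
    intro ξ η h
    have : {α | f α = f ξ} = {α | f α = f η} := by ext a; simp [h]
    simp only [hg, this]
  by_cases hlt : {ξ | g ξ < ξ} ∈ U
  · obtain ⟨c, hc⟩ := hU.2.2 g hlt
    exfalso
    refine hcon ⟨f c, Filter.mem_of_superset hc ?_⟩
    intro ξ hξ
    simp only [Set.mem_setOf_eq] at hξ ⊢
    rw [← hgfib ξ, hξ]
  · have heq : {ξ | g ξ = ξ} ∈ U := by
      have : {ξ : κ.ord.ToType | ¬ g ξ < ξ} ∈ U := Ultrafilter.compl_mem_iff_notMem.2 hlt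
      refine Filter.mem_of_superset this ?_
      intro ξ hξ
      simp only [Set.mem_setOf_eq] at hξ ⊢
      rcases lt_trichotomy (g ξ) ξ with h | h | h
      · exact absurd h hξ
      · exact h
      · exact absurd h (hgle ξ)
    refine ⟨{ξ | g ξ = ξ}, heq, ?_⟩
    intro a ha b hb hab
    simp only [Set.mem_setOf_eq] at ha hb
    have := hsame a b hab
    rw [ha, hb] at this
    exact this


/-- If `g` is injective on a `U`-set then `g` cannot push `U` onto a different normal `V`. -/
theorem push_distinct {U V : Ultrafilter κ.ord.ToType} (hU : IsNormalMeasure κ U)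
    (hV : IsNormalMeasure κ V) (hUV : U ≠ V) {R : Set κ.ord.ToType} (hR : R ∈ U)
    {g : κ.ord.ToType → κ.ord.ToType} (hginj : Set.InjOn g R) :
    ∃ B ∈ V, {y | y ∈ R ∧ g y ∈ B} ∉ U := by
  classical
  by_contra hcon
  push_neg at hcon
  have hall : ∀ B ∈ V, {y | y ∈ R ∧ g y ∈ B} ∈ U := fun B hB => (hcon B hB)
  -- g is not regressive on a U-set
  have hlt : {ξ | g ξ < ξ} ∉ U := by
    intro hlt
    obtain ⟨c, hc⟩ := hU.2.2 g hlt
    have h1 := hall {c}ᶜ (Ultrafilter.compl_mem_iff_notMem.2 (hV.2.1 c))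
    obtain ⟨y, hy1, hy2⟩ := Ultrafilter.nonempty_of_mem (Filter.inter_mem hc h1)
    exact hy2.2 hy1
  -- g is not increasing on a U-set
  have hgt : {y | y ∈ R ∧ y < g y} ∉ U := by
    intro hW
    set W : Set κ.ord.ToType := {y | y ∈ R ∧ y < g y} with hWdef
    have hIm : g '' W ∈ V := by
      by_contra hIm
      have h2 := hall (g '' W)ᶜ (Ultrafilter.compl_mem_iff_notMem.2 hIm)
      obtain ⟨y, hy1, hy2⟩ := Ultrafilter.nonempty_of_mem (Filter.inter_mem hW h2)
      exact hy2.2 ⟨y, hy1, rfl⟩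
    set h : κ.ord.ToType → κ.ord.ToType := fun z =>
      if hz : ∃ y, y ∈ W ∧ g y = z then hz.choose else z with hhdef
    have hreg : {ξ | h ξ < ξ} ∈ V := by
      refine Filter.mem_of_superset hIm ?_
      rintro z ⟨y, hyW, rfl⟩
      have hz : ∃ y', y' ∈ W ∧ g y' = g y := ⟨y, hyW, rfl⟩
      simp only [Set.mem_setOf_eq, hhdef, dif_pos hz]
      have := hz.choose_spec
      calc hz.choose < g hz.choose := this.1.2
        _ = g y := this.2
    obtain ⟨c, hc⟩ := hV.2.2 h hreg
    have hsub : {ξ | h ξ = c} ∩ g '' W ⊆ {g c} := by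
      rintro z ⟨hz1, y, hyW, rfl⟩
      have hz : ∃ y', y' ∈ W ∧ g y' = g y := ⟨y, hyW, rfl⟩
      simp only [Set.mem_setOf_eq, hhdef, dif_pos hz] at hz1
      have := hz.choose_spec
      simp only [Set.mem_singleton_iff]
      rw [← this.2, hz1]
    have : ({g c} : Set κ.ord.ToType) ∈ V :=
      Filter.mem_of_superset (Filter.inter_mem hc hIm) hsub
    exact hV.2.1 (g c) this
  -- so g is the identity on a U-set
  have heq : {y | y ∈ R ∧ g y = y} ∈ U := by
    have h1 : {ξ : κ.ord.ToType | ¬ g ξ < ξ} ∈ U := Ultrafilter.compl_mem_iff_notMem.2 hlt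
    have h2 : {y : κ.ord.ToType | y ∈ R ∧ y < g y}ᶜ ∈ U :=
      Ultrafilter.compl_mem_iff_notMem.2 hgt
    refine Filter.mem_of_superset (Filter.inter_mem hR (Filter.inter_mem h1 h2)) ?_
    rintro y ⟨hyR, hy1, hy2⟩
    simp only [Set.mem_compl_iff, Set.mem_setOf_eq, not_and, not_lt] at hy1 hy2
    exact ⟨hyR, le_antisymm (hy2 hyR) hy1⟩
  -- hence U = V
  refine hUV (Ultrafilter.ext fun s => ⟨fun hs => ?_, fun hs => ?_⟩)
  · by_contra hsV
    have h3 := hall sᶜ (Ultrafilter.compl_mem_iff_notMem.2 hsV)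
    obtain ⟨y, hy1, hy2, hy3⟩ := Ultrafilter.nonempty_of_mem
      (Filter.inter_mem hs (Filter.inter_mem heq h3))
    have h4 := hy3.2
    rw [hy2.2] at h4
    exact h4 hy1
  · have h3 := hall s hs
    refine Filter.mem_of_superset (Filter.inter_mem heq h3) ?_
    rintro y ⟨hy1, hy2⟩
    rw [← hy1.2]
    exact hy2.2

/-- separating a pair of injective functions along two distinct normal measures -/
theorem pair_sep {U V : Ultrafilter κ.ord.ToType} (hU : IsNormalMeasure κ U)
    (hV : IsNormalMeasure κ V) (hUV : U ≠ V) {Y : Type v}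
    (F G : κ.ord.ToType → Y) (I J : Set κ.ord.ToType) (hI : I ∈ U) (hJ : J ∈ V)
    (hFinj : Set.InjOn F I) (hGinj : Set.InjOn G J) :
    ∃ A ∈ U, ∃ B ∈ V, A ⊆ I ∧ B ⊆ J ∧ ∀ y ∈ A, ∀ y' ∈ B, F y ≠ G y' := by
  classical
  set R : Set κ.ord.ToType := {y | y ∈ I ∧ F y ∈ G '' J} with hRdef
  by_cases hR : R ∈ U
  · set g : κ.ord.ToType → κ.ord.ToType := fun y =>
      if hy : ∃ y', y' ∈ J ∧ G y' = F y then hy.choose else y with hgdef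
    have hgspec : ∀ y ∈ R, g y ∈ J ∧ G (g y) = F y := by
      rintro y ⟨hyI, y', hy'J, hy'⟩
      have hy : ∃ y'', y'' ∈ J ∧ G y'' = F y := ⟨y', hy'J, hy'⟩
      simp only [hgdef, dif_pos hy]
      exact hy.choose_spec
    have hginj : Set.InjOn g R := by
      intro y1 hy1 y2 hy2 h12
      have s1 := hgspec y1 hy1
      have s2 := hgspec y2 hy2
      refine hFinj hy1.1 hy2.1 ?_
      rw [← s1.2, ← s2.2, h12]
    obtain ⟨B₀, hB₀, hB₀U⟩ := push_distinct hU hV hUV hR hginj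
    refine ⟨R ∩ {y | y ∈ R ∧ g y ∈ B₀}ᶜ, ?_, B₀ ∩ J, Filter.inter_mem hB₀ hJ,
      ?_, Set.inter_subset_right, ?_⟩
    · exact Filter.inter_mem hR (Ultrafilter.compl_mem_iff_notMem.2 hB₀U)
    · exact fun y hy => hy.1.1
    · rintro y ⟨hyR, hyc⟩ y' ⟨hy'B, hy'J⟩ hFG
      have s := hgspec y hyR
      have : g y = y' := hGinj s.1 hy'J (by rw [s.2, hFG])
      exact hyc ⟨hyR, this ▸ hy'B⟩
  · refine ⟨I ∩ Rᶜ, Filter.inter_mem hI (Ultrafilter.compl_mem_iff_notMem.2 hR),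
      J, hJ, Set.inter_subset_left, le_refl J, ?_⟩
    rintro y ⟨hyI, hyR⟩ y' hy'J hFG
    exact hyR ⟨hyI, y', hy'J, hFG.symm⟩

/-- splitting off a large piece outside the ultrafilter -/
theorem split_off (hκ : Cardinal.aleph0 ≤ κ) {U : Ultrafilter κ.ord.ToType}
    (hU : IsNormalMeasure κ U) {S₀ : Set κ.ord.ToType} (hS : S₀ ∈ U) :
    ∃ T ⊆ S₀, S₀ \ T ∈ U ∧ κ ≤ #T := by
  have hκS : κ ≤ #S₀ := card_le_of_mem hU hS
  have hSinf : Cardinal.aleph0 ≤ #S₀ := le_trans hκ hκS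
  have : #(↥S₀ ⊕ ↥S₀) = #↥S₀ := by
    simp only [Cardinal.mk_sum, Cardinal.lift_id]
    exact Cardinal.add_eq_self hSinf
  obtain ⟨e⟩ := Cardinal.eq.1 this
  set j1 : ↥S₀ → ↥S₀ := fun s => e (Sum.inl s) with hj1
  set j2 : ↥S₀ → ↥S₀ := fun s => e (Sum.inr s) with hj2
  have hj1inj : Function.Injective j1 := fun a b h => Sum.inl_injective (e.injective h)
  have hj2inj : Function.Injective j2 := fun a b h => Sum.inr_injective (e.injective h)
  have hdisj : ∀ a b, j1 a ≠ j2 b := by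
    intro a b h
    exact Sum.inl_ne_inr (e.injective h)
  set P1 : Set κ.ord.ToType := Subtype.val '' Set.range j1 with hP1
  set P2 : Set κ.ord.ToType := Subtype.val '' Set.range j2 with hP2
  have hP1S : P1 ⊆ S₀ := by rintro z ⟨s, _, rfl⟩; exact s.2
  have hP2S : P2 ⊆ S₀ := by rintro z ⟨s, _, rfl⟩; exact s.2
  have hcard : ∀ (j : ↥S₀ → ↥S₀), Function.Injective j →
      κ ≤ #(Subtype.val '' Set.range j) := by
    intro j hj
    rw [Cardinal.mk_image_eq Subtype.val_injective, Cardinal.mk_range_eq _ hj]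
    exact hκS
  have hP1P2 : Disjoint P1 P2 := by
    rw [Set.disjoint_left]
    rintro z ⟨s, ⟨a, rfl⟩, rfl⟩ ⟨t, ⟨b, hb⟩, ht⟩
    have : j1 a = j2 b := by
      rw [hb]; exact Subtype.ext ht.symm
    exact hdisj a b this
  by_cases h1 : P1 ∈ U
  · refine ⟨P2, hP2S, ?_, hcard j2 hj2inj⟩
    refine Filter.mem_of_superset h1 ?_
    intro z hz
    exact ⟨hP1S hz, Set.disjoint_left.1 hP1P2 hz⟩
  · refine ⟨P1, hP1S, ?_, hcard j1 hj1inj⟩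
    have : S₀ ∩ P1ᶜ ∈ U :=
      Filter.inter_mem hS (Ultrafilter.compl_mem_iff_notMem.2 h1)
    exact this

/-- extending an injective-on-a-big-set function to a globally injective one -/
theorem extend_inj {Z : Type u} {Y : Type v} (D : Ultrafilter Z) (f : Z → Y)
    (S T : Set Z) (hTS : T ⊆ S) (hD : S \ T ∈ D) (hinj : Set.InjOn f S)
    (hcard : #Z ≤ #T) : ∃ h : Z → Y, Function.Injective h ∧ {z | f z = h z} ∈ D := by
  classical
  have h1 : Cardinal.lift.{v} #Z ≤ Cardinal.lift.{u} #(f '' T) := by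
    rw [Cardinal.mk_image_eq_of_injOn_lift f T (hinj.mono hTS)]
    exact Cardinal.lift_le.2 hcard
  obtain ⟨j⟩ := Cardinal.lift_mk_le'.1 h1
  set h : Z → Y := fun z => if z ∈ S \ T then f z else (j z : Y) with hhdef
  refine ⟨h, ?_, ?_⟩
  · intro z1 z2 h12
    by_cases m1 : z1 ∈ S \ T <;> by_cases m2 : z2 ∈ S \ T
    · simp only [hhdef, if_pos m1, if_pos m2] at h12
      exact hinj m1.1 m2.1 h12
    · simp only [hhdef, if_pos m1, if_neg m2] at h12
      exfalso
      obtain ⟨t, htT, ht⟩ := (j z2).2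
      have : z1 = t := hinj m1.1 (hTS htT) (by rw [h12, ht])
      exact m1.2 (this ▸ htT)
    · simp only [hhdef, if_neg m1, if_pos m2] at h12
      exfalso
      obtain ⟨t, htT, ht⟩ := (j z1).2
      have : z2 = t := hinj m2.1 (hTS htT) (by rw [← h12, ht])
      exact m2.2 (this ▸ htT)
    · simp only [hhdef, if_neg m1, if_neg m2] at h12
      exact j.injective (Subtype.ext h12)
  · refine Filter.mem_of_superset hD ?_
    intro z hz
    simp only [Set.mem_setOf_eq, hhdef, if_pos hz]


/-- cardinality of the tuple spaces -/
theorem mk_tup_le (lam : ℕ → Cardinal.{u}) (hinf : ∀ n, Cardinal.aleph0 ≤ lam n)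
    (hmono : Monotone lam) : ∀ n, #(Tup lam (n + 1)) ≤ lam n := by
  intro n
  induction n with
  | zero =>
    have h : #(Tup lam 1) ≤ #((lam 0).ord.ToType) := by
      refine Cardinal.mk_le_of_injective (f := fun z : Tup lam 1 => z 0) ?_
      intro z1 z2 h
      funext i
      rw [Subsingleton.elim i 0]
      exact h
    rwa [Cardinal.mk_ord_toType] at h
  | succ n ih =>
    have emb : Tup lam (n + 2) ↪ (Tup lam (n + 1)) × (lam (n + 1)).ord.ToType := by
      refine ⟨fun z => (fun i => z i.castSucc, z (Fin.last (n + 1))), ?_⟩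
      intro z1 z2 h
      have h1 := congrArg Prod.fst h
      have h2 := congrArg Prod.snd h
      simp only at h1 h2
      funext i
      refine Fin.lastCases ?_ ?_ i
      · exact h2
      · intro j
        exact congrFun h1 j
    calc #(Tup lam (n + 2)) ≤ #((Tup lam (n + 1)) × (lam (n + 1)).ord.ToType) :=
          Cardinal.mk_le_of_injective emb.injective
      _ = #(Tup lam (n + 1)) * lam (n + 1) := by
          rw [Cardinal.mk_prod, Cardinal.lift_id, Cardinal.lift_id, Cardinal.mk_ord_toType]
      _ ≤ lam (n + 1) * lam (n + 1) := by
          exact mul_le_mul' (le_trans ih (hmono (Nat.le_succ n))) le_rfl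
      _ = lam (n + 1) := Cardinal.mul_eq_self (hinf (n + 1))

/-- The key construction: simultaneous injectivity along a family of distinct
normal measures. -/
theorem inj_family (hκ : Cardinal.aleph0 ≤ κ) {X : Type u} {Y : Type v}
    (e : X ↪ κ.ord.ToType)
    (P : X → Ultrafilter κ.ord.ToType) (hP : ∀ x, IsNormalMeasure κ (P x))
    (hPinj : Function.Injective P) (F : X → κ.ord.ToType → Y)
    (I : X → Set κ.ord.ToType) (hI : ∀ x, I x ∈ P x)
    (hFinj : ∀ x, Set.InjOn (F x) (I x)) :
    ∃ S : X → Set κ.ord.ToType, (∀ x, S x ∈ P x) ∧ (∀ x, S x ⊆ I x) ∧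
      ∀ x y x' y', y ∈ S x → y' ∈ S x' → F x y = F x' y' → x = x' ∧ y = y' := by
  classical
  have hpair : ∀ x x', ∃ A B, x ≠ x' → A ∈ P x ∧ B ∈ P x' ∧ A ⊆ I x ∧ B ⊆ I x' ∧
      ∀ y ∈ A, ∀ y' ∈ B, F x y ≠ F x' y' := by
    intro x x'
    by_cases h : x = x'
    · exact ⟨∅, ∅, fun hne => absurd h hne⟩
    · obtain ⟨A, hA, B, hB, hAI, hBI, hsep⟩ :=
        pair_sep (hP x) (hP x') (fun hPP => h (hPinj hPP)) (F x) (F x')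
          (I x) (I x') (hI x) (hI x') (hFinj x) (hFinj x')
      exact ⟨A, B, fun _ => ⟨hA, hB, hAI, hBI, hsep⟩⟩
  choose A B hAB using hpair
  -- the "small collision" sets
  set Small : X → X → Set κ.ord.ToType := fun x x' =>
    {y | y ∈ I x ∧ F x y ∈ F x' '' (I x' ∩ {y' | y' ≤ e x})} with hSmalldef
  have hSmall : ∀ x x', x ≠ x' → #(Small x x') < κ := by
    intro x x' _
    have : ∃ φ : ↥(Small x x') → ↥(I x' ∩ {y' | y' ≤ e x} : Set _),
        Function.Injective φ := by
      have hmem : ∀ y : ↥(Small x x'), ∃ y', y' ∈ (I x' ∩ {y' | y' ≤ e x} : Set _) ∧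
          F x' y' = F x y.1 := by
        rintro ⟨y, hy1, y', hy', hy'2⟩
        exact ⟨y', hy', hy'2⟩
      choose φ hφ1 hφ2 using hmem
      refine ⟨fun y => ⟨φ y, hφ1 y⟩, ?_⟩
      intro y1 y2 h12
      have : φ y1 = φ y2 := congrArg Subtype.val h12
      have hFy : F x y1.1 = F x y2.1 := by rw [← hφ2 y1, ← hφ2 y2, this]
      exact Subtype.ext (hFinj x y1.2.1 y2.2.1 hFy)
    obtain ⟨φ, hφ⟩ := this
    calc #(Small x x') ≤ #(I x' ∩ {y' | y' ≤ e x} : Set _) := Cardinal.mk_le_of_injective hφ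
      _ ≤ #{y' : κ.ord.ToType | y' ≤ e x} :=
          Cardinal.mk_le_mk_of_subset Set.inter_subset_right
      _ < κ := card_Iic_lt hκ (e x)
  -- the guard sets
  set G : X → κ.ord.ToType → Set κ.ord.ToType := fun x α =>
    {y | ∀ x', x' ≠ x → e x' = α → (y ∈ A x x' ∧ y ∈ B x' x ∧ y ∉ Small x x')} with hGdef
  have hG : ∀ x α, G x α ∈ P x := by
    intro x α
    by_cases hex : ∃ x', x' ≠ x ∧ e x' = α
    · obtain ⟨x₀, hx₀, hex₀⟩ := hex
      have h1 : A x x₀ ∈ P x := ((hAB x x₀) hx₀.symm).1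
      have h2 : B x₀ x ∈ P x := ((hAB x₀ x) hx₀).2.1
      have h3 : (Small x x₀)ᶜ ∈ P x := Ultrafilter.compl_mem_iff_notMem.2
        (small_not_mem (hP x) _ (hSmall x x₀ (Ne.symm hx₀)))
      refine Filter.mem_of_superset (Filter.inter_mem h1 (Filter.inter_mem h2 h3)) ?_
      rintro y ⟨hy1, hy2, hy3⟩ x' hne heq
      have : x' = x₀ := e.injective (heq.trans hex₀.symm)
      subst this
      exact ⟨hy1, hy2, hy3⟩
    · refine Filter.mem_of_superset Filter.univ_mem ?_
      intro y _ x' hne heq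
      exact absurd ⟨x', hne, heq⟩ hex
  set S : X → Set κ.ord.ToType := fun x =>
    I x ∩ {y | e x < y} ∩ {y | ∀ α, α < y → y ∈ G x α} with hSdef
  have hSP : ∀ x, S x ∈ P x := by
    intro x
    exact Filter.inter_mem (Filter.inter_mem (hI x) (tail_mem hκ (hP x) (e x)))
      (diag_mem (hP x) (G x) (hG x))
  refine ⟨S, hSP, fun x => le_trans Set.inter_subset_left Set.inter_subset_left, ?_⟩
  rintro x y x' y' ⟨⟨hyI, hyg⟩, hyd⟩ ⟨⟨hy'I, hy'g⟩, hy'd⟩ hF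
  simp only [Set.mem_setOf_eq] at hyg hy'g hyd hy'd
  by_cases hxx : x = x'
  · subst hxx
    exact ⟨rfl, hFinj x hyI hy'I hF⟩
  exfalso
  rcases le_or_gt y (e x') with h1 | h1
  · rcases le_or_gt y' (e x) with h2 | h2
    · exact absurd (((hyg.trans_le h1).trans hy'g).trans_le h2) (lt_irrefl _)
    · -- y is small for the pair (x', x): y' must avoid Small x' x
      have hgd := (hy'd (e x) h2) x hxx rfl
      exact hgd.2.2 ⟨hy'I, ⟨y, ⟨hyI, h1⟩, hF⟩⟩
  · rcases le_or_gt y' (e x) with h2 | h2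
    · -- y' is small for the pair (x, x'): y must avoid Small x x'
      have hgd := (hyd (e x') h1) x' (Ne.symm hxx) rfl
      exact hgd.2.2 ⟨hyI, ⟨y', ⟨hy'I, h2⟩, hF.symm⟩⟩
    · have hgd := (hyd (e x') h1) x' (Ne.symm hxx) rfl
      have hgd' := (hy'd (e x) h2) x hxx rfl
      exact ((hAB x x') hxx).2.2.2.2 y hgd.1 y' hgd'.2.1 hF


end ClassAux

open ClassAux Cardinal

/-- Principle of classification of functions.  In the paper's notation,
`d n` is `D_{n+1}` (an ultrafilter on `λ_0 × ⋯ × λ_n`) and `p n` is `π_{n+1}` (a function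
on `λ_0 × ⋯ × λ_n` whose values are normal measures on `λ_{n+1}`); `D_1` is a normal
measure on `λ_0` and `D_{i+1} = D_i * π_i` is the sum.  Then every function `f` with
domain `λ_0 × ⋯ × λ_{m}` is `D_{m+1}`-equivalent to a one-to-one function, or to a
function of the form `(x_0,…,x_m) ↦ h (x_0,…,x_{k-1})` for some `k ≤ m` (with `h` a
constant when `k = 0`). -/
theorem classification_of_functions (lam : ℕ → Cardinal.{u})
    (hinf : ∀ n, Cardinal.aleph0 ≤ lam n) (hmono : Monotone lam)
    (d : (n : ℕ) → Ultrafilter (Tup lam (n + 1)))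
    (p : (n : ℕ) → Tup lam (n + 1) → Ultrafilter (lam (n + 1)).ord.ToType)
    (hbase : IsNormalMeasure (lam 0) ((d 0).map fun x => x ⟨0, Nat.zero_lt_one⟩))
    (hpnorm : ∀ n x, IsNormalMeasure (lam (n + 1)) (p n x))
    (hpinj : ∀ n, ∃ K ∈ d n, Set.InjOn (p n) K)
    (hsum : ∀ n (S : Set (Tup lam (n + 2))),
      S ∈ d (n + 1) ↔
        {x : Tup lam (n + 1) |
          {y : (lam (n + 1)).ord.ToType |
            (Fin.snoc x y : Tup lam (n + 2)) ∈ S} ∈ p n x} ∈ d n)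
    (m : ℕ) {Y : Type v} (f : Tup lam (m + 1) → Y) :
    (∃ h : Tup lam (m + 1) → Y, Function.Injective h ∧ {x | f x = h x} ∈ d m) ∨
    (∃ (k : ℕ) (_ : k ≤ m) (h : Tup lam k → Y),
      {x : Tup lam (m + 1) |
        f x = h (fun i : Fin k => x (Fin.castLE (by omega) i))} ∈ d m) := by
  classical
  induction m with
  | zero =>
    set ev : Tup lam 1 → (lam 0).ord.ToType := fun x => x ⟨0, Nat.zero_lt_one⟩ with hev
    set lift1 : (lam 0).ord.ToType → Tup lam 1 := fun a =>
      (Fin.snoc (fun i : Fin 0 => i.elim0) a : Tup lam 1) with hlift1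
    have hevlift : ∀ a, ev (lift1 a) = a := by
      intro a
      show (Fin.snoc (fun i : Fin 0 => i.elim0) a : Tup lam 1) (Fin.last 0) = a
      exact Fin.snoc_last _ _
    have hxev : ∀ x : Tup lam 1, lift1 (ev x) = x := by
      intro x
      have h0 : (fun i : Fin 0 => i.elim0) = (Fin.init x : Tup lam 0) :=
        funext fun i => i.elim0
      calc lift1 (ev x) = (Fin.snoc (Fin.init x) (x (Fin.last 0)) : Tup lam 1) := by
            rw [hlift1]
            simp only [h0]
            rfl
        _ = x := Fin.snoc_init_self x
    set f' : (lam 0).ord.ToType → Y := fun a => f (lift1 a) with hf'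
    have hff' : ∀ x, f x = f' (ev x) := fun x => (congrArg f (hxev x)).symm
    rcases dichotomy hbase f' with ⟨A, hA, hinj⟩ | ⟨c, hc⟩
    · left
      have hSset : ev ⁻¹' A ∈ d 0 := Ultrafilter.mem_map.1 hA
      have hfinj : Set.InjOn f (ev ⁻¹' A) := by
        intro x hx x' hx' h
        rw [hff' x, hff' x'] at h
        have hevv : ev x = ev x' := hinj hx hx' h
        rw [← hxev x, ← hxev x', hevv]
      obtain ⟨T₀, hT₀A, hT₀U, hT₀card⟩ := split_off (hinf 0) hbase hA
      have hTS : ev ⁻¹' T₀ ⊆ ev ⁻¹' A := Set.preimage_mono hT₀A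
      have hdiff : ev ⁻¹' A \ ev ⁻¹' T₀ ∈ d 0 := by
        have heq : ev ⁻¹' A \ ev ⁻¹' T₀ = ev ⁻¹' (A \ T₀) := by
          ext z; simp [Set.mem_diff]
        rw [heq]
        exact Ultrafilter.mem_map.1 hT₀U
      have hcard : #(Tup lam 1) ≤ #(ev ⁻¹' T₀) := by
        have h1 : #(Tup lam 1) ≤ lam 0 := mk_tup_le lam hinf hmono 0
        refine le_trans h1 (le_trans hT₀card ?_)
        refine Cardinal.mk_le_of_injective (f := fun t : ↥T₀ =>
          (⟨lift1 t.1, by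
            simp only [Set.mem_preimage]
            rw [hevlift]
            exact t.2⟩ : ↥(ev ⁻¹' T₀))) ?_
        intro t1 t2 h
        have h2 := congrArg (fun q : ↥(ev ⁻¹' T₀) => ev q.1) h
        simp only [hevlift] at h2
        exact Subtype.ext h2
      exact extend_inj (d 0) f (ev ⁻¹' A) (ev ⁻¹' T₀) hTS hdiff hfinj hcard
    · right
      refine ⟨0, le_refl 0, fun _ => c, ?_⟩
      have h1 : ev ⁻¹' {a | f' a = c} ∈ d 0 := Ultrafilter.mem_map.1 hc
      refine Filter.mem_of_superset h1 ?_
      intro x hx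
      simp only [Set.mem_preimage, Set.mem_setOf_eq] at hx ⊢
      rw [hff' x]
      exact hx
  | succ n IH =>
    set fx : Tup lam (n + 1) → (lam (n + 1)).ord.ToType → Y :=
      fun x y => f (Fin.snoc x y) with hfx
    have hfront_snoc : ∀ (x : Tup lam (n + 1)) (y : (lam (n + 1)).ord.ToType),
        (fun i : Fin (n + 1) => (Fin.snoc x y : Tup lam (n + 2)) i.castSucc) = x := by
      intro x y
      funext i
      simp
    have hsnoc_last : ∀ (x : Tup lam (n + 1)) (y : (lam (n + 1)).ord.ToType),
        (Fin.snoc x y : Tup lam (n + 2)) (Fin.last (n + 1)) = y := by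
      intro x y
      simp
    have hsnoc_front : ∀ z : Tup lam (n + 2),
        (Fin.snoc (fun i : Fin (n + 1) => z i.castSucc) (z (Fin.last (n + 1)))
          : Tup lam (n + 2)) = z := by
      intro z
      exact Fin.snoc_init_self z
    set Cset : Set (Tup lam (n + 1)) :=
      {x | ∃ c, {y | fx x y = c} ∈ p n x} with hCset
    by_cases hC : Cset ∈ d n
    · -- almost-everywhere constant sections
      have hY : Nonempty Y := by
        have h0 : Nonempty (Tup lam (n + 2)) := by
          have hne : ∀ i : Fin (n + 2), Nonempty ((lam i).ord.ToType) :=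
            fun i => tup_nonempty lam hinf i
          exact ⟨fun i => Classical.arbitrary _⟩
        exact ⟨f (Classical.arbitrary _)⟩
      set g : Tup lam (n + 1) → Y := fun x =>
        if hx : ∃ c, {y | fx x y = c} ∈ p n x then hx.choose
        else Classical.arbitrary Y with hgdef
      have hg : ∀ x ∈ Cset, {y | fx x y = g x} ∈ p n x := by
        intro x hx
        have hx' : ∃ c, {y | fx x y = c} ∈ p n x := hx
        have hgx : g x = hx'.choose := by rw [hgdef]; exact dif_pos hx'
        rw [hgx]
        exact hx'.choose_spec
      rcases IH g with ⟨h, hinj, hmem⟩ | ⟨k, hk, h, hmem⟩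
      · right
        refine ⟨n + 1, le_refl _, h, ?_⟩
        rw [hsum n]
        refine Filter.mem_of_superset (Filter.inter_mem hC hmem) ?_
        rintro x ⟨hx1, hx2⟩
        refine Filter.mem_of_superset (hg x hx1) ?_
        intro y hy
        simp only [Set.mem_setOf_eq] at hy hx2 ⊢
        have harg : (fun i : Fin (n + 1) =>
            (Fin.snoc x y : Tup lam (n + 2)) (Fin.castLE (by omega) i)) = x := by
          funext i
          show (Fin.snoc x y : Tup lam (n + 2)) i.castSucc = x i
          simp
        rw [harg]
        calc f (Fin.snoc x y) = g x := hy
          _ = h x := hx2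
      · right
        refine ⟨k, le_trans hk (Nat.le_succ n), h, ?_⟩
        rw [hsum n]
        refine Filter.mem_of_superset (Filter.inter_mem hC hmem) ?_
        rintro x ⟨hx1, hx2⟩
        refine Filter.mem_of_superset (hg x hx1) ?_
        intro y hy
        simp only [Set.mem_setOf_eq] at hy hx2 ⊢
        have harg : (fun i : Fin k =>
            (Fin.snoc x y : Tup lam (n + 2)) (Fin.castLE (by omega) i)) =
            (fun i : Fin k => x (Fin.castLE (by omega) i)) := by
          funext i
          show (Fin.snoc x y : Tup lam (n + 2))
              (Fin.castLE (by omega : k ≤ n + 1) i).castSucc =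
            x (Fin.castLE (by omega) i)
          rw [Fin.snoc_castSucc]
        rw [harg]
        calc f (Fin.snoc x y) = g x := hy
          _ = h _ := hx2
    · -- almost-everywhere injective sections
      left
      have hCc : Csetᶜ ∈ d n := Ultrafilter.compl_mem_iff_notMem.2 hC
      obtain ⟨K, hK, hKinj⟩ := hpinj n
      have hW : K ∩ Csetᶜ ∈ d n := Filter.inter_mem hK hCc
      set W := K ∩ Csetᶜ with hWdef
      have hWinjset : ∀ x ∈ W, ∃ A ∈ p n x, Set.InjOn (fx x) A := by
        intro x hx
        rcases dichotomy (hpnorm n x) (fx x) with hcase | hcase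
        · exact hcase
        · exact absurd hcase hx.2
      have hemb : Nonempty (↥W ↪ (lam (n + 1)).ord.ToType) := by
        rw [← Cardinal.le_def]
        calc #↥W ≤ #(Tup lam (n + 1)) := Cardinal.mk_set_le W
          _ ≤ lam n := mk_tup_le lam hinf hmono n
          _ ≤ lam (n + 1) := hmono (Nat.le_succ n)
          _ = #((lam (n + 1)).ord.ToType) := (Cardinal.mk_ord_toType _).symm
      obtain ⟨e⟩ := hemb
      have hPinj : Function.Injective (fun w : ↥W => p n w.1) := by
        intro w1 w2 hh
        exact Subtype.ext (hKinj w1.2.1 w2.2.1 hh)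
      choose I hImem hIinj using fun w : ↥W => hWinjset w.1 w.2
      obtain ⟨S, hS1, hS2, hS3⟩ := inj_family (hinf (n + 1)) e (fun w : ↥W => p n w.1)
        (fun w => hpnorm n w.1) hPinj (fun w y => fx w.1 y) I hImem hIinj
      set S' : Tup lam (n + 1) → Set ((lam (n + 1)).ord.ToType) := fun x =>
        if hx : x ∈ W then S ⟨x, hx⟩ else ∅ with hS'def
      have hS'W : ∀ x (hx : x ∈ W), S' x = S ⟨x, hx⟩ := fun x hx => dif_pos hx
      set Sset : Set (Tup lam (n + 2)) :=
        {z | (fun i : Fin (n + 1) => z i.castSucc) ∈ W ∧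
          z (Fin.last (n + 1)) ∈ S' (fun i : Fin (n + 1) => z i.castSucc)} with hSsetdef
      have hsnocSset : ∀ (x : Tup lam (n + 1)) (hx : x ∈ W)
          (y : (lam (n + 1)).ord.ToType),
          ((Fin.snoc x y : Tup lam (n + 2)) ∈ Sset ↔ y ∈ S ⟨x, hx⟩) := by
        intro x hx y
        rw [hSsetdef]
        simp only [Set.mem_setOf_eq, hfront_snoc x y, hsnoc_last x y, hS'W x hx]
        exact ⟨fun hh => hh.2, fun hh => ⟨hx, hh⟩⟩
      have hfinj : Set.InjOn f Sset := by
        intro z hz z' hz' hff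
        have h1 : z (Fin.last (n + 1)) ∈ S ⟨_, hz.1⟩ := by
          have h1' := hz.2
          rwa [hS'W _ hz.1] at h1'
        have h2 : z' (Fin.last (n + 1)) ∈ S ⟨_, hz'.1⟩ := by
          have h2' := hz'.2
          rwa [hS'W _ hz'.1] at h2'
        have hFF : fx (fun i : Fin (n + 1) => z i.castSucc) (z (Fin.last (n + 1))) =
            fx (fun i : Fin (n + 1) => z' i.castSucc) (z' (Fin.last (n + 1))) := by
          show f (Fin.snoc (fun i : Fin (n + 1) => z i.castSucc)
              (z (Fin.last (n + 1)))) =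
            f (Fin.snoc (fun i : Fin (n + 1) => z' i.castSucc)
              (z' (Fin.last (n + 1))))
          rw [hsnoc_front z, hsnoc_front z']
          exact hff
        obtain ⟨hxeq, hyeq⟩ := hS3 ⟨_, hz.1⟩ (z (Fin.last (n + 1)))
          ⟨_, hz'.1⟩ (z' (Fin.last (n + 1))) h1 h2 hFF
        have hxeq' : (fun i : Fin (n + 1) => z i.castSucc) =
            (fun i : Fin (n + 1) => z' i.castSucc) := congrArg Subtype.val hxeq
        rw [← hsnoc_front z, ← hsnoc_front z', hxeq', hyeq]
      have hSsetmem : Sset ∈ d (n + 1) := by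
        rw [hsum n]
        refine Filter.mem_of_superset hW ?_
        intro x hx
        simp only [Set.mem_setOf_eq]
        refine Filter.mem_of_superset (hS1 ⟨x, hx⟩) ?_
        intro y hy
        exact (hsnocSset x hx y).2 hy
      obtain ⟨x₀, hx₀⟩ := Ultrafilter.nonempty_of_mem hW
      obtain ⟨T₀, hT₀sub, hT₀mem, hT₀card⟩ :=
        split_off (hinf (n + 1)) (hpnorm n x₀) (hS1 ⟨x₀, hx₀⟩)
      set T : Set (Tup lam (n + 2)) :=
        {z | (fun i : Fin (n + 1) => z i.castSucc) = x₀ ∧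
          z (Fin.last (n + 1)) ∈ T₀} with hTdef
      have hTS : T ⊆ Sset := by
        rintro z ⟨hz1, hz2⟩
        refine ⟨by rw [hz1]; exact hx₀, ?_⟩
        rw [hz1, hS'W x₀ hx₀]
        exact hT₀sub hz2
      have hdiff : Sset \ T ∈ d (n + 1) := by
        rw [hsum n]
        refine Filter.mem_of_superset hW ?_
        intro x hx
        simp only [Set.mem_setOf_eq]
        by_cases hxx : x = x₀
        · subst hxx
          refine Filter.mem_of_superset hT₀mem ?_
          intro y hy
          refine ⟨(hsnocSset x hx y).2 (by
            have := hy.1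
            convert this using 2), ?_⟩
          intro hT'
          have hy2 := hT'.2
          rw [hsnoc_last x y] at hy2
          exact hy.2 hy2
        · refine Filter.mem_of_superset (hS1 ⟨x, hx⟩) ?_
          intro y hy
          refine ⟨(hsnocSset x hx y).2 hy, ?_⟩
          intro hT'
          have := hT'.1
          rw [hfront_snoc x y] at this
          exact hxx this
      have hcard : #(Tup lam (n + 2)) ≤ #T := by
        calc #(Tup lam (n + 2)) ≤ lam (n + 1) := mk_tup_le lam hinf hmono (n + 1)
          _ ≤ #T₀ := hT₀card
          _ ≤ #T := by
            refine Cardinal.mk_le_of_injective (f := fun t : ↥T₀ =>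
              (⟨Fin.snoc x₀ t.1, hfront_snoc x₀ t.1, by
                rw [hsnoc_last x₀ t.1]; exact t.2⟩ : ↥T)) ?_
            intro t1 t2 hth
            have hth' := congrArg Subtype.val hth
            apply Subtype.ext
            rw [← hsnoc_last x₀ t1.1, ← hsnoc_last x₀ t2.1]
            simp only at hth'
            rw [hth']
      exact extend_inj (d (n + 1)) f Sset T hTS hdiff hfinj hcard
end

section
/- Let κ be an infinite cardinal and μ⃗ = ⟨μ_α : α < κ⟩ a sequence of pairwise distinct κ-complete ultrafilters on κ. Then every antichain in the forcing notion P_{μ⃗} (a set of pairwise incompatible conditions) has cardinality at most κ. -/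
universe u

/-- The set of ordinals below `κ`, realized as a type. -/
abbrev KT (κ : Cardinal.{u}) : Type u := κ.ord.ToType

/-- A condition of the forcing `P_{μ⃗}`: a nonempty finite subset `s` of `κ` together
with a `μ⃗`-choice function `F` (i.e. `F α ∈ μ_α` for all `α < κ`). -/
def IsCond {κ : Cardinal.{u}} (μ : KT κ → Ultrafilter (KT κ))
    (p : Finset (KT κ) × (KT κ → Set (KT κ))) : Prop :=
  p.1.Nonempty ∧ ∀ α, p.2 α ∈ μ α

/-- `p = (s', F')` is stronger than `q = (s, F)`:
(a) `s ⊆ s'` and `s' ∩ (max s + 1) = s`; (b) `F' α ⊆ F α` for all `α`;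
(c) `s'(i) ∈ F (s'(i-1))` for all `|s| ≤ i < |s'|` (increasing enumeration). -/
def Stronger {κ : Cardinal.{u}} (p q : Finset (KT κ) × (KT κ → Set (KT κ))) : Prop :=
  q.1 ⊆ p.1 ∧ (∀ x ∈ p.1, (∃ y ∈ q.1, x ≤ y) → x ∈ q.1) ∧
  (∀ α, p.2 α ⊆ q.2 α) ∧
  ∀ i : ℕ, q.1.card ≤ i → ∀ h : i < (p.1.sort (· ≤ ·)).length,
    (p.1.sort (· ≤ ·)).get ⟨i, h⟩ ∈ q.2 ((p.1.sort (· ≤ ·)).get ⟨i - 1, by omega⟩)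

/-- Compatibility: some condition is stronger than both. -/
def Compatible {κ : Cardinal.{u}} (μ : KT κ → Ultrafilter (KT κ))
    (p q : Finset (KT κ) × (KT κ → Set (KT κ))) : Prop :=
  ∃ r, IsCond μ r ∧ Stronger r p ∧ Stronger r q

/-- Every antichain of the forcing `P_{μ⃗}` has cardinality at most `κ`
(the `κ⁺`-chain condition). -/
theorem antichain_le_kappa (κ : Cardinal.{u}) (hκ : Cardinal.aleph0 ≤ κ)
    (μ : KT κ → Ultrafilter (KT κ)) (hdist : Function.Injective μ)
    (hcomp : ∀ α, UFComplete κ (μ α))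
    (A : Set (Finset (KT κ) × (KT κ → Set (KT κ))))
    (hA : ∀ p ∈ A, IsCond μ p)
    (hanti : ∀ p ∈ A, ∀ q ∈ A, p ≠ q → ¬ Compatible μ p q) :
    Cardinal.mk A ≤ κ := by
  -- Two conditions with the same finite part are compatible, so p ↦ p.1 is injective on A.
  have key : ∀ p ∈ A, ∀ q ∈ A, p.1 = q.1 → p = q := by
    intro p hp q hq hfst
    by_contra hne
    apply hanti p hp q hq hne
    refine ⟨(p.1, fun α => p.2 α ∩ q.2 α), ⟨(hA p hp).1, fun α => ?_⟩, ?_, ?_⟩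
    · exact Filter.inter_mem ((hA p hp).2 α) ((hA q hq).2 α)
    · refine ⟨subset_rfl, fun x hx _ => hx, fun α => Set.inter_subset_left, ?_⟩
      intro i hi h
      simp only [Finset.length_sort] at h
      omega
    · refine ⟨hfst ▸ subset_rfl, fun x hx hy => hfst ▸ hx, fun α => Set.inter_subset_right, ?_⟩
      intro i hi h
      simp only [Finset.length_sort] at h
      rw [← hfst] at hi
      omega
  have hinj : Function.Injective (fun p : A => (p : Finset (KT κ) × (KT κ → Set (KT κ))).1) := by
    intro p q h
    exact Subtype.ext (key p p.2 q q.2 h)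
  have hmk : Cardinal.mk (KT κ) = κ := by
    simpa using Cardinal.mk_toType κ.ord
  have hinf : Infinite (KT κ) := by
    rw [Cardinal.infinite_iff, hmk]; exact hκ
  calc Cardinal.mk A ≤ Cardinal.mk (Finset (KT κ)) := Cardinal.mk_le_of_injective hinj
    _ = Cardinal.mk (KT κ) := Cardinal.mk_finset_of_infinite _
    _ = κ := hmk
end
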